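/- arXiv:math/0511520 — 5 statements merged into one kernel-verified Lean document; each statement's English description precedes it below -/
import Mathlib

section
/- Let 0 < δ < 1, p ≥ 1 with α = δ - 1/p > 0, and set q = 1/δ. For a continuous h : [0,1] → ℝ with finite fractional Sobolev seminorm, the map ω(s,t) = |h|_{W^{δ,p};[s,t]}^q · (t-s)^{αq} is a super-additive control: ω(s,t) + ω(t,u) ≤ ω(s,u) for all 0 ≤ s ≤ t ≤ u ≤ 1. -/
open MeasureTheory

/-- Super-additivity of `(x, y) ↦ x ^ θ * y ^ (1-θ)` for `0 < θ < 1`. -/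
lemma aux_superadd {θ a b c d : ℝ} (hθ0 : 0 < θ) (hθ1 : θ < 1)
    (ha : 0 ≤ a) (hb : 0 ≤ b) (hc : 0 ≤ c) (hd : 0 ≤ d) :
    a ^ θ * b ^ (1 - θ) + c ^ θ * d ^ (1 - θ) ≤ (a + c) ^ θ * (b + d) ^ (1 - θ) := by
  have hθ0' : 0 ≤ θ := le_of_lt hθ0
  have hθ1' : 0 ≤ 1 - θ := by linarith
  rcases eq_or_lt_of_le (add_nonneg ha hc) with hac | hac
  · have ha0 : a = 0 := by linarith [hc]
    have hc0 : c = 0 := by linarith [ha]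
    rw [ha0, hc0, Real.zero_rpow (ne_of_gt hθ0), zero_mul, zero_mul, add_zero]
    positivity
  rcases eq_or_lt_of_le (add_nonneg hb hd) with hbd | hbd
  · have hb0 : b = 0 := by linarith [hd]
    have hd0 : d = 0 := by linarith [hb]
    have h1θ : (0:ℝ) < 1 - θ := by linarith
    rw [hb0, hd0, Real.zero_rpow (ne_of_gt h1θ), mul_zero, mul_zero, add_zero]
    positivity
  have hacpos : (0:ℝ) < a + c := hac
  have hbdpos : (0:ℝ) < b + d := hbd
  have key : ∀ x y : ℝ, 0 ≤ x → 0 ≤ y →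
      x ^ θ * y ^ (1 - θ) ≤ (θ * (x / (a + c)) + (1 - θ) * (y / (b + d))) *
        ((a + c) ^ θ * (b + d) ^ (1 - θ)) := by
    intro x y hx hy
    have h1 : x ^ θ * y ^ (1 - θ)
        = ((x / (a + c)) ^ θ * (y / (b + d)) ^ (1 - θ)) *
          ((a + c) ^ θ * (b + d) ^ (1 - θ)) := by
      rw [Real.div_rpow hx hacpos.le, Real.div_rpow hy hbdpos.le]
      have hA : (a + c) ^ θ ≠ 0 := by positivity
      have hB : (b + d) ^ (1 - θ) ≠ 0 := by positivity
      field_simp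
    rw [h1]
    apply mul_le_mul_of_nonneg_right
    · exact Real.geom_mean_le_arith_mean2_weighted hθ0' hθ1'
        (div_nonneg hx hacpos.le) (div_nonneg hy hbdpos.le) (by ring)
    · positivity
  calc a ^ θ * b ^ (1 - θ) + c ^ θ * d ^ (1 - θ)
      ≤ (θ * (a / (a + c)) + (1 - θ) * (b / (b + d))) *
          ((a + c) ^ θ * (b + d) ^ (1 - θ)) +
        (θ * (c / (a + c)) + (1 - θ) * (d / (b + d))) *
          ((a + c) ^ θ * (b + d) ^ (1 - θ)) :=
        add_le_add (key a b ha hb) (key c d hc hd)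
    _ = (θ * ((a + c) / (a + c)) + (1 - θ) * ((b + d) / (b + d))) *
          ((a + c) ^ θ * (b + d) ^ (1 - θ)) := by ring
    _ = (a + c) ^ θ * (b + d) ^ (1 - θ) := by
        rw [div_self (ne_of_gt hacpos), div_self (ne_of_gt hbdpos)]
        ring

/-- `Icc a b ×ˢ Icc a b` is a.e. equal to `Ioc a b ×ˢ Ioc a b`. -/
lemma aux_prod_ae (a b : ℝ) :
    (Set.Ioc a b ×ˢ Set.Ioc a b : Set (ℝ × ℝ)) =ᵐ[volume] (Set.Icc a b ×ˢ Set.Icc a b) := by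
  rw [Filter.eventuallyEq_set]
  have hnull : volume (({a} ×ˢ (Set.univ : Set ℝ)) ∪ ((Set.univ : Set ℝ) ×ˢ {a})) = 0 := by
    apply measure_union_null
    · rw [Measure.volume_eq_prod, Measure.prod_prod, Real.volume_singleton, zero_mul]
    · rw [Measure.volume_eq_prod, Measure.prod_prod, Real.volume_singleton, mul_zero]
  have hsub : {x : ℝ × ℝ | ¬(x ∈ (Set.Ioc a b ×ˢ Set.Ioc a b : Set (ℝ × ℝ)) ↔
      x ∈ (Set.Icc a b ×ˢ Set.Icc a b : Set (ℝ × ℝ)))} ⊆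
      ({a} ×ˢ (Set.univ : Set ℝ)) ∪ ((Set.univ : Set ℝ) ×ˢ {a}) := by
    intro x hx
    simp only [Set.mem_setOf_eq, Set.mem_prod, Set.mem_Ioc, Set.mem_Icc] at hx
    simp only [Set.mem_union, Set.mem_prod, Set.mem_singleton_iff, Set.mem_univ, and_true,
      true_and]
    by_contra hcon
    push_neg at hcon
    apply hx
    constructor
    · rintro ⟨⟨h1, h2⟩, h3, h4⟩; exact ⟨⟨le_of_lt h1, h2⟩, le_of_lt h3, h4⟩
    · rintro ⟨⟨h1, h2⟩, h3, h4⟩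
      exact ⟨⟨lt_of_le_of_ne h1 (Ne.symm hcon.1), h2⟩, lt_of_le_of_ne h3 (Ne.symm hcon.2), h4⟩
  exact measure_mono_null hsub hnull

/-- Super-additivity of the control `ω(s,t) = |h|_{W^{δ,p};[s,t]}^q (t-s)^{αq}`,
with `α = δ - 1/p > 0` and `q = 1/δ`. -/
theorem stmt_3 (δ p α q : ℝ) (hδ : 0 < δ) (hδ1 : δ < 1) (hp : 1 ≤ p)
    (hα : α = δ - 1/p) (hα0 : 0 < α) (hq : q = 1/δ)
    (h : ℝ → ℝ) (hcont : ContinuousOn h (Set.Icc 0 1))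
    (hFin : IntegrableOn
      (fun x : ℝ × ℝ => |h x.2 - h x.1| ^ p / |x.2 - x.1| ^ (1 + δ * p))
      (Set.Icc (0:ℝ) 1 ×ˢ Set.Icc (0:ℝ) 1) volume)
    (S : ℝ → ℝ → ℝ)
    (hS : ∀ s t, S s t =
      (∫ x in Set.Icc s t ×ˢ Set.Icc s t,
        |h x.2 - h x.1| ^ p / |x.2 - x.1| ^ (1 + δ * p)) ^ (1/p))
    (ω : ℝ → ℝ → ℝ)
    (hω : ∀ s t, ω s t = (S s t) ^ q * (t - s) ^ (α * q)) :
    ∀ s t u, 0 ≤ s → s ≤ t → t ≤ u → u ≤ 1 → ω s t + ω t u ≤ ω s u := by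
  intro s t u hs hst htu hu1
  set f : ℝ × ℝ → ℝ := fun x => |h x.2 - h x.1| ^ p / |x.2 - x.1| ^ (1 + δ * p) with hfdef
  have hf0 : ∀ x, 0 ≤ f x := fun x =>
    div_nonneg (Real.rpow_nonneg (abs_nonneg _) _) (Real.rpow_nonneg (abs_nonneg _) _)
  have hp0 : 0 < p := lt_of_lt_of_le one_pos hp
  have hδ0 : (0:ℝ) < δ := hδ
  have hδp : 1 < δ * p := by
    have h1 : 1/p < δ := by
      have := hα0
      rw [hα] at this
      linarith
    calc (1:ℝ) = (1/p) * p := by field_simp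
    _ < δ * p := mul_lt_mul_of_pos_right h1 hp0
  set θ : ℝ := 1 / (δ * p) with hθdef
  have hδppos : (0:ℝ) < δ * p := by linarith
  have hθ0 : 0 < θ := by positivity
  have hθ1 : θ < 1 := by
    rw [hθdef, div_lt_one hδppos]
    exact hδp
  -- the squared integrals
  have hI0 : ∀ a b : ℝ, 0 ≤ ∫ x in Set.Icc a b ×ˢ Set.Icc a b, f x := fun a b =>
    integral_nonneg hf0
  -- rewrite ω in terms of the integral
  have hωI : ∀ a b : ℝ, ω a b =
      (∫ x in Set.Icc a b ×ˢ Set.Icc a b, f x) ^ θ * (b - a) ^ (1 - θ) := by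
    intro a b
    have hexp1 : (1/p) * q = θ := by
      rw [hq, hθdef]
      field_simp
    have hexp2 : α * q = 1 - θ := by
      rw [hα, hq, hθdef]
      rw [sub_mul, mul_one_div, div_self (ne_of_gt hδ0), div_mul_div_comm, one_mul,
        mul_comm p δ]
    rw [hω, hS, ← Real.rpow_mul (hI0 a b), hexp1, hexp2]
  -- integrability on the big square
  have hIntsu : IntegrableOn f (Set.Icc s u ×ˢ Set.Icc s u) volume :=
    hFin.mono_set (Set.prod_mono (Set.Icc_subset_Icc hs hu1) (Set.Icc_subset_Icc hs hu1))
  -- super-additivity of the integral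
  have hsubA : (Set.Icc s t ×ˢ Set.Icc s t : Set (ℝ × ℝ)) ⊆ Set.Icc s u ×ˢ Set.Icc s u :=
    Set.prod_mono (Set.Icc_subset_Icc le_rfl htu) (Set.Icc_subset_Icc le_rfl htu)
  have hsubB : (Set.Ioc t u ×ˢ Set.Ioc t u : Set (ℝ × ℝ)) ⊆ Set.Icc s u ×ˢ Set.Icc s u :=
    Set.prod_mono (Set.Ioc_subset_Icc_self.trans (Set.Icc_subset_Icc hst le_rfl))
      (Set.Ioc_subset_Icc_self.trans (Set.Icc_subset_Icc hst le_rfl))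
  have hdisj : Disjoint (Set.Icc s t ×ˢ Set.Icc s t : Set (ℝ × ℝ))
      (Set.Ioc t u ×ˢ Set.Ioc t u) := by
    rw [Set.disjoint_left]
    rintro x ⟨hx1, _⟩ ⟨hy1, _⟩
    exact absurd hy1.1 (not_lt.2 hx1.2)
  have hIadd : (∫ x in Set.Icc s t ×ˢ Set.Icc s t, f x) +
      (∫ x in Set.Icc t u ×ˢ Set.Icc t u, f x) ≤
      ∫ x in Set.Icc s u ×ˢ Set.Icc s u, f x := by
    have hBeq : (∫ x in Set.Ioc t u ×ˢ Set.Ioc t u, f x) =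
        ∫ x in Set.Icc t u ×ˢ Set.Icc t u, f x :=
      setIntegral_congr_set (aux_prod_ae t u)
    have hunion : (∫ x in (Set.Icc s t ×ˢ Set.Icc s t) ∪ (Set.Ioc t u ×ˢ Set.Ioc t u), f x) =
        (∫ x in Set.Icc s t ×ˢ Set.Icc s t, f x) +
        (∫ x in Set.Ioc t u ×ˢ Set.Ioc t u, f x) :=
      setIntegral_union hdisj (measurableSet_Ioc.prod measurableSet_Ioc)
        (hIntsu.mono_set hsubA) (hIntsu.mono_set hsubB)
    have hmono : (∫ x in (Set.Icc s t ×ˢ Set.Icc s t) ∪ (Set.Ioc t u ×ˢ Set.Ioc t u), f x) ≤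
        ∫ x in Set.Icc s u ×ˢ Set.Icc s u, f x :=
      setIntegral_mono_set hIntsu (Filter.Eventually.of_forall hf0)
        (HasSubset.Subset.eventuallyLE (Set.union_subset hsubA hsubB))
    rw [← hBeq, ← hunion]
    exact hmono
  -- put everything together
  rw [hωI s t, hωI t u, hωI s u]
  calc (∫ x in Set.Icc s t ×ˢ Set.Icc s t, f x) ^ θ * (t - s) ^ (1 - θ) +
      (∫ x in Set.Icc t u ×ˢ Set.Icc t u, f x) ^ θ * (u - t) ^ (1 - θ)
      ≤ ((∫ x in Set.Icc s t ×ˢ Set.Icc s t, f x) +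
          (∫ x in Set.Icc t u ×ˢ Set.Icc t u, f x)) ^ θ *
        ((t - s) + (u - t)) ^ (1 - θ) :=
      aux_superadd hθ0 hθ1 (hI0 s t) (sub_nonneg.2 hst) (hI0 t u) (sub_nonneg.2 htu)
    _ ≤ (∫ x in Set.Icc s u ×ˢ Set.Icc s u, f x) ^ θ * (u - s) ^ (1 - θ) := by
      have h1 : (t - s) + (u - t) = u - s := by ring
      rw [h1]
      apply mul_le_mul_of_nonneg_right
      · exact Real.rpow_le_rpow (add_nonneg (hI0 s t) (hI0 t u)) hIadd (le_of_lt hθ0)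
      · exact Real.rpow_nonneg (by linarith) _
end

section
/- Let 0 < δ < 1, p ≥ 1 with α = δ - 1/p > 0, and q = 1/δ. There is a constant C = C(δ,p) such that for any continuous h : [0,1] → ℝ and any 0 ≤ a < b ≤ 1, the q-variation of h satisfies |h|_{q-var;[a,b]} ≤ C (b-a)^α |h|_{W^{δ,p};[a,b]}. In particular W^{δ,p}([0,1]) embeds continuously into C^{q-var}. -/
open MeasureTheory Set
open scoped ENNReal NNReal

namespace GRRaux

noncomputable def G (h : ℝ → ℝ) (δ p : ℝ) (x : ℝ × ℝ) : ℝ≥0∞ :=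
  ENNReal.ofReal (|h x.2 - h x.1| ^ p / |x.2 - x.1| ^ (1 + δ * p))

noncomputable def mean (h : ℝ → ℝ) (c d : ℝ) : ℝ := (d - c)⁻¹ * ∫ x in Icc c d, h x

lemma ptwise (h : ℝ → ℝ) {δ p : ℝ} (hδ : 0 < δ) (hp : 1 ≤ p) {u v r : ℝ}
    (hr : 0 < r) (huv : |v - u| ≤ r) :
    ENNReal.ofReal |h v - h u| ≤ G h δ p (u, v) ^ (1/p) * ENNReal.ofReal (r ^ ((1 + δ*p)/p)) := by
  have hp0 : (0:ℝ) < p := lt_of_lt_of_le one_pos hp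
  have hκ : (0:ℝ) < 1 + δ*p := by positivity
  by_cases hvu : v = u
  · simp [hvu]
  · have hd : 0 < |v - u| := abs_pos.2 (sub_ne_zero.2 hvu)
    have hg0 : 0 ≤ |h v - h u| ^ p / |v - u| ^ (1 + δ*p) := by positivity
    have key : |h v - h u| =
        (|h v - h u| ^ p / |v - u| ^ (1 + δ*p)) ^ (1/p) * |v - u| ^ ((1 + δ*p)/p) := by
      rw [Real.div_rpow (by positivity) (by positivity), one_div,
        Real.rpow_rpow_inv (abs_nonneg _) hp0.ne', ← Real.rpow_mul (abs_nonneg _),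
        show (1 + δ*p) * p⁻¹ = (1 + δ*p)/p from (div_eq_mul_inv _ _).symm]
      exact (div_mul_cancel₀ _ (ne_of_gt (Real.rpow_pos_of_pos hd _))).symm
    calc ENNReal.ofReal |h v - h u|
        = ENNReal.ofReal ((|h v - h u| ^ p / |v - u| ^ (1 + δ*p)) ^ (1/p) *
            |v - u| ^ ((1 + δ*p)/p)) := by rw [← key]
      _ ≤ ENNReal.ofReal ((|h v - h u| ^ p / |v - u| ^ (1 + δ*p)) ^ (1/p) *
            r ^ ((1 + δ*p)/p)) := by
            apply ENNReal.ofReal_le_ofReal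
            have := Real.rpow_le_rpow (abs_nonneg (v - u)) huv (by positivity : (0:ℝ) ≤ (1 + δ*p)/p)
            exact mul_le_mul_of_nonneg_left this (by positivity)
      _ = _ := by
            rw [ENNReal.ofReal_mul (by positivity)]
            congr 1
            rw [← ENNReal.ofReal_rpow_of_nonneg hg0 (by positivity : (0:ℝ) ≤ 1/p)]
            rfl

lemma lint_rpow_le {α : Type*} [MeasurableSpace α] (μ : Measure α) {p : ℝ} (g : α → ℝ≥0∞)
    (hg : AEMeasurable g μ) (hp : 1 ≤ p) :
    ∫⁻ a, (g a) ^ (1/p) ∂μ ≤ (∫⁻ a, g a ∂μ) ^ (1/p) * (μ univ) ^ (1 - 1/p) := by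
  have hp0 : (0:ℝ) < p := lt_of_lt_of_le one_pos hp
  rcases eq_or_lt_of_le hp with heq | hlt
  · simp [← heq]
  · have hpq : p.HolderConjugate (p/(p-1)) := Real.holderConjugate_iff.2 ⟨hlt, by field_simp; ring⟩
    have hmeas : AEMeasurable (fun a => (g a) ^ (1/p)) μ := hg.pow aemeasurable_const
    have H := ENNReal.lintegral_mul_le_Lp_mul_Lq μ hpq (f := fun a => g a ^ (1/p))
      (g := fun _ => (1:ℝ≥0∞)) hmeas aemeasurable_const
    simp only [Pi.mul_apply, mul_one] at H
    have e1 : ∀ a, ((g a) ^ (1/p)) ^ p = g a := by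
      intro a
      rw [← ENNReal.rpow_mul, one_div, inv_mul_cancel₀ hp0.ne', ENNReal.rpow_one]
    have e2 : (1:ℝ)/(p/(p-1)) = 1 - 1/p := by field_simp
    calc ∫⁻ a, (g a) ^ (1/p) ∂μ
        ≤ (∫⁻ a, ((g a) ^ (1/p)) ^ p ∂μ) ^ (1/p) *
            (∫⁻ _, (1:ℝ≥0∞) ^ (p/(p-1)) ∂μ) ^ (1/(p/(p-1))) := H
      _ = (∫⁻ a, g a ∂μ) ^ (1/p) * (μ univ) ^ (1 - 1/p) := by
            simp only [e1, ENNReal.one_rpow, lintegral_one, e2]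

lemma step (h : ℝ → ℝ) (hcont : ContinuousOn h (Icc 0 1)) {δ p : ℝ} (hδ : 0 < δ) (hp : 1 ≤ p)
    {a b c d c' d' : ℝ} (hc : c' ≤ c) (hd : d ≤ d') (hcd : c < d) (hc'd' : c' < d')
    (hac : a ≤ c') (hdb : d' ≤ b) (ha : 0 ≤ a) (hb : b ≤ 1) :
    ENNReal.ofReal |mean h c' d' - mean h c d| ≤
      ENNReal.ofReal ((d' - c') ^ ((1 + δ*p)/p) * ((d - c) * (d' - c')) ^ (-(1/p))) *
        (∫⁻ x in Icc a b ×ˢ Icc a b, G h δ p x) ^ (1/p) := by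
  have hp0 : (0:ℝ) < p := lt_of_lt_of_le one_pos hp
  have hA0 : (0:ℝ) < d - c := sub_pos.2 hcd
  have hB0 : (0:ℝ) < d' - c' := sub_pos.2 hc'd'
  have hAB0 : (0:ℝ) < (d - c) * (d' - c') := mul_pos hA0 hB0
  have hSm : MeasurableSet (Icc c d ×ˢ Icc c' d' : Set (ℝ × ℝ)) :=
    measurableSet_Icc.prod measurableSet_Icc
  have hsub01 : Icc c' d' ⊆ Icc (0:ℝ) 1 := Icc_subset_Icc (le_trans ha hac) (le_trans hdb hb)
  have hsubcd : Icc c d ⊆ Icc c' d' := Icc_subset_Icc hc hd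
  have hS01 : (Icc c d ×ˢ Icc c' d' : Set (ℝ × ℝ)) ⊆ Icc 0 1 ×ˢ Icc 0 1 :=
    prod_mono (hsubcd.trans hsub01) hsub01
  have hcontS : ContinuousOn (fun x : ℝ × ℝ => h x.2 - h x.1) (Icc c d ×ˢ Icc c' d') := by
    apply ContinuousOn.mono _ hS01
    apply ContinuousOn.sub
    · exact hcont.comp continuous_snd.continuousOn (fun x hx => hx.2)
    · exact hcont.comp continuous_fst.continuousOn (fun x hx => hx.1)
  have hintS : IntegrableOn (fun x : ℝ × ℝ => h x.2 - h x.1) (Icc c d ×ˢ Icc c' d') :=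
    hcontS.integrableOn_compact (isCompact_Icc.prod isCompact_Icc)
  have hI1 : IntegrableOn h (Icc c d) :=
    ((hcont.mono (hsubcd.trans hsub01)).integrableOn_compact isCompact_Icc)
  have hI2 : IntegrableOn h (Icc c' d') :=
    ((hcont.mono hsub01).integrableOn_compact isCompact_Icc)
  have hfin1 : volume (Icc c d) = ENNReal.ofReal (d - c) := Real.volume_Icc
  have hfin2 : volume (Icc c' d') = ENNReal.ofReal (d' - c') := Real.volume_Icc
  have hprod : (volume : Measure (ℝ × ℝ)).restrict (Icc c d ×ˢ Icc c' d') =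
      (volume.restrict (Icc c d)).prod (volume.restrict (Icc c' d')) := by
    rw [Measure.volume_eq_prod, Measure.prod_restrict]
  have hident : ∫ x in Icc c d ×ˢ Icc c' d', (h x.2 - h x.1) =
      (d - c) * (∫ x in Icc c' d', h x) - (d' - c') * ∫ x in Icc c d, h x := by
    have hint' : Integrable (fun x : ℝ × ℝ => h x.2 - h x.1)
        ((volume.restrict (Icc c d)).prod (volume.restrict (Icc c' d'))) := by
      rw [← hprod]; exact hintS
    calc ∫ x in Icc c d ×ˢ Icc c' d', (h x.2 - h x.1)
        = ∫ x, (h x.2 - h x.1)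
            ∂((volume.restrict (Icc c d)).prod (volume.restrict (Icc c' d'))) := by
          rw [← hprod]
      _ = ∫ x in Icc c d, (∫ y in Icc c' d', (h y - h x)) := integral_prod _ hint'
      _ = ∫ x in Icc c d, ((∫ y in Icc c' d', h y) - (d' - c') * h x) := by
          apply setIntegral_congr_fun measurableSet_Icc
          intro x _
          dsimp only
          rw [integral_sub hI2 (integrableOn_const (by
              rw [hfin2]; exact ENNReal.ofReal_ne_top)),
            setIntegral_const, measureReal_def, hfin2, ENNReal.toReal_ofReal hB0.le, smul_eq_mul]
      _ = (d - c) * (∫ x in Icc c' d', h x) - (d' - c') * ∫ x in Icc c d, h x := by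
          rw [integral_sub (integrableOn_const (μ := volume) (s := Icc c d)
              (C := ∫ y in Icc c' d', h y) (by
              rw [hfin1]; exact ENNReal.ofReal_ne_top)) (hI1.const_mul _),
            setIntegral_const, measureReal_def, hfin1, ENNReal.toReal_ofReal hA0.le, smul_eq_mul,
            integral_const_mul]
  have hmean : |mean h c' d' - mean h c d| =
      ((d - c) * (d' - c'))⁻¹ * |∫ x in Icc c d ×ˢ Icc c' d', (h x.2 - h x.1)| := by
    have e : mean h c' d' - mean h c d = ((d - c) * (d' - c'))⁻¹ *
        ((d - c) * (∫ x in Icc c' d', h x) - (d' - c') * ∫ x in Icc c d, h x) := by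
      unfold mean
      field_simp
    rw [e, hident, abs_mul, abs_inv, abs_of_pos hAB0]
  -- measurability of G on the rectangle
  have hGmeas : AEMeasurable (G h δ p) (volume.restrict (Icc c d ×ˢ Icc c' d')) := by
    have h2 : AEMeasurable (fun x : ℝ × ℝ => h x.2) (volume.restrict (Icc c d ×ˢ Icc c' d')) :=
      (hcont.comp continuous_snd.continuousOn
        (fun x hx => hsub01 hx.2)).aemeasurable hSm
    have h1 : AEMeasurable (fun x : ℝ × ℝ => h x.1) (volume.restrict (Icc c d ×ˢ Icc c' d')) :=
      (hcont.comp continuous_fst.continuousOn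
        (fun x hx => (hsubcd.trans hsub01) hx.1)).aemeasurable hSm
    apply ENNReal.measurable_ofReal.comp_aemeasurable
    apply AEMeasurable.div
    · exact (continuous_abs.measurable.comp_aemeasurable (h2.sub h1)).pow aemeasurable_const
    · exact Measurable.aemeasurable
        (((measurable_snd.sub measurable_fst).abs).pow measurable_const)
  -- pointwise estimate
  have hmono_pt : ∀ x ∈ Icc c d ×ˢ Icc c' d', ENNReal.ofReal |h x.2 - h x.1| ≤
      G h δ p x ^ (1/p) * ENNReal.ofReal ((d' - c') ^ ((1 + δ*p)/p)) := by
    intro x hx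
    have hx1 : x.1 ∈ Icc c' d' := hsubcd hx.1
    have hx2 : x.2 ∈ Icc c' d' := hx.2
    have h1 : |x.2 - x.1| ≤ d' - c' := by
      rw [abs_sub_le_iff]
      constructor <;> [linarith [hx1.1, hx2.2]; linarith [hx1.2, hx2.1]]
    have := ptwise h hδ hp hB0 h1
    simpa using this
  have hlintmono : ∫⁻ x in Icc c d ×ˢ Icc c' d', ENNReal.ofReal |h x.2 - h x.1| ≤
      ∫⁻ x in Icc c d ×ˢ Icc c' d',
        G h δ p x ^ (1/p) * ENNReal.ofReal ((d' - c') ^ ((1 + δ*p)/p)) := by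
    apply lintegral_mono_ae
    exact (ae_restrict_iff' hSm).2 (Filter.Eventually.of_forall hmono_pt)
  have hfactor : ∫⁻ x in Icc c d ×ˢ Icc c' d',
        G h δ p x ^ (1/p) * ENNReal.ofReal ((d' - c') ^ ((1 + δ*p)/p)) =
      (∫⁻ x in Icc c d ×ˢ Icc c' d', G h δ p x ^ (1/p)) *
        ENNReal.ofReal ((d' - c') ^ ((1 + δ*p)/p)) :=
    lintegral_mul_const'' _ (hGmeas.pow aemeasurable_const)
  have hvolS : volume (Icc c d ×ˢ Icc c' d' : Set (ℝ × ℝ)) =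
      ENNReal.ofReal ((d - c) * (d' - c')) := by
    rw [Measure.volume_eq_prod, Measure.prod_prod, hfin1, hfin2, ← ENNReal.ofReal_mul hA0.le]
  have hhold : ∫⁻ x in Icc c d ×ˢ Icc c' d', G h δ p x ^ (1/p) ≤
      (∫⁻ x in Icc c d ×ˢ Icc c' d', G h δ p x) ^ (1/p) *
        ENNReal.ofReal (((d - c) * (d' - c')) ^ (1 - 1/p)) := by
    have := lint_rpow_le (volume.restrict (Icc c d ×ˢ Icc c' d')) (G h δ p) hGmeas hp
    rwa [Measure.restrict_apply_univ, hvolS,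
      ENNReal.ofReal_rpow_of_nonneg hAB0.le (by
        rw [sub_nonneg, div_le_one hp0]; exact hp)] at this
  have hFmono : ∫⁻ x in Icc c d ×ˢ Icc c' d', G h δ p x ≤
      ∫⁻ x in Icc a b ×ˢ Icc a b, G h δ p x :=
    lintegral_mono_set (prod_mono (Icc_subset_Icc (hac.trans hc) (hd.trans hdb))
      (Icc_subset_Icc hac hdb))
  -- the integral bound in ENNReal
  have hnorm : ENNReal.ofReal |∫ x in Icc c d ×ˢ Icc c' d', (h x.2 - h x.1)| ≤
      ∫⁻ x in Icc c d ×ˢ Icc c' d', ENNReal.ofReal |h x.2 - h x.1| := by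
    have := enorm_integral_le_lintegral_enorm
      (μ := volume.restrict (Icc c d ×ˢ Icc c' d')) (fun x : ℝ × ℝ => h x.2 - h x.1)
    simpa [← ofReal_norm, Real.norm_eq_abs] using this
  -- put everything together
  rw [hmean, ENNReal.ofReal_mul (inv_nonneg.2 hAB0.le)]
  have main : ENNReal.ofReal |∫ x in Icc c d ×ˢ Icc c' d', (h x.2 - h x.1)| ≤
      (∫⁻ x in Icc a b ×ˢ Icc a b, G h δ p x) ^ (1/p) *
        (ENNReal.ofReal (((d - c) * (d' - c')) ^ (1 - 1/p)) *
          ENNReal.ofReal ((d' - c') ^ ((1 + δ*p)/p))) := by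
    refine hnorm.trans (hlintmono.trans ?_)
    rw [hfactor]
    refine le_trans (mul_le_mul' hhold le_rfl) ?_
    rw [mul_assoc]
    exact mul_le_mul' (ENNReal.rpow_le_rpow hFmono (by positivity)) le_rfl
  refine le_trans (mul_le_mul' le_rfl main) ?_
  rw [show ENNReal.ofReal (((d - c) * (d' - c'))⁻¹) *
        ((∫⁻ x in Icc a b ×ˢ Icc a b, G h δ p x) ^ (1/p) *
          (ENNReal.ofReal (((d - c) * (d' - c')) ^ (1 - 1/p)) *
            ENNReal.ofReal ((d' - c') ^ ((1 + δ*p)/p)))) =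
      (ENNReal.ofReal (((d - c) * (d' - c'))⁻¹) *
        ENNReal.ofReal (((d - c) * (d' - c')) ^ (1 - 1/p)) *
          ENNReal.ofReal ((d' - c') ^ ((1 + δ*p)/p))) *
        (∫⁻ x in Icc a b ×ˢ Icc a b, G h δ p x) ^ (1/p) by ring]
  apply mul_le_mul' _ le_rfl
  rw [← ENNReal.ofReal_mul (inv_nonneg.2 hAB0.le), ← ENNReal.ofReal_mul (by positivity)]
  apply ENNReal.ofReal_le_ofReal
  rw [show ((d - c) * (d' - c'))⁻¹ * ((d - c) * (d' - c')) ^ (1 - 1/p) *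
        (d' - c') ^ ((1 + δ*p)/p) =
      (d' - c') ^ ((1 + δ*p)/p) * (((d - c) * (d' - c'))⁻¹ *
        ((d - c) * (d' - c')) ^ (1 - 1/p)) by ring]
  refine mul_le_mul_of_nonneg_left (le_of_eq ?_) (by positivity)
  rw [← Real.rpow_neg_one ((d - c) * (d' - c')), ← Real.rpow_add hAB0,
    show (-1 : ℝ) + (1 - 1/p) = -(1/p) by ring]

lemma mean_close (h : ℝ → ℝ) {c d w ε : ℝ} (hcd : c < d) (hw : w ∈ Icc c d)
    (hint : IntegrableOn h (Icc c d)) (hε : 0 ≤ ε)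
    (hsmall : ∀ x ∈ Icc c d, |h x - h w| ≤ ε) :
    |mean h c d - h w| ≤ ε := by
  have hA : 0 < d - c := sub_pos.2 hcd
  have hvol : volume (Icc c d) = ENNReal.ofReal (d - c) := Real.volume_Icc
  have hfin : volume (Icc c d) < ⊤ := by rw [hvol]; exact ENNReal.ofReal_lt_top
  have hconst : IntegrableOn (fun _ => h w) (Icc c d) := integrableOn_const hfin.ne
  have key : mean h c d - h w = (d - c)⁻¹ * ∫ x in Icc c d, (h x - h w) := by
    rw [integral_sub hint hconst, setIntegral_const, measureReal_def, hvol,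
      ENNReal.toReal_ofReal hA.le, smul_eq_mul]
    unfold mean
    field_simp
  rw [key, abs_mul, abs_inv, abs_of_pos hA]
  have hb : ‖∫ x in Icc c d, (h x - h w)‖ ≤ ε * (volume (Icc c d)).toReal :=
    norm_setIntegral_le_of_norm_le_const hfin
      (fun x hx => by rw [Real.norm_eq_abs]; exact hsmall x hx)
  rw [Real.norm_eq_abs, hvol, ENNReal.toReal_ofReal hA.le] at hb
  calc (d - c)⁻¹ * |∫ x in Icc c d, (h x - h w)| ≤ (d - c)⁻¹ * (ε * (d - c)) :=
        mul_le_mul_of_nonneg_left hb (inv_nonneg.2 hA.le)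
    _ = ε := by field_simp

lemma chain (h : ℝ → ℝ) (hcont : ContinuousOn h (Icc 0 1)) {δ p α : ℝ} (hδ : 0 < δ)
    (hp : 1 ≤ p) (hα : α = δ - 1/p) (hα0 : 0 < α)
    {s t w : ℝ} (hst : s < t) (hs : 0 ≤ s) (ht : t ≤ 1)
    (cs ds : ℕ → ℝ) (hlen : ∀ n, ds n - cs n = (t - s)/2^n)
    (hnest : ∀ n, Icc (cs (n+1)) (ds (n+1)) ⊆ Icc (cs n) (ds n))
    (h0 : cs 0 = s) (hw : ∀ n, w ∈ Icc (cs n) (ds n)) :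
    ENNReal.ofReal |h w - mean h s t| ≤
      ENNReal.ofReal ((2:ℝ)^(1/p) / (1 - 2^(-α)) * (t-s)^α) *
        (∫⁻ x in Icc s t ×ˢ Icc s t, G h δ p x) ^ (1/p) := by
  have hp0 : (0:ℝ) < p := lt_of_lt_of_le one_pos hp
  have hL : (0:ℝ) < t - s := sub_pos.2 hst
  have hr01 : (2:ℝ)^(-α) < 1 :=
    Real.rpow_lt_one_of_one_lt_of_neg one_lt_two (by linarith)
  have hr0 : (0:ℝ) < (2:ℝ)^(-α) := Real.rpow_pos_of_pos two_pos _
  have hden : (0:ℝ) < 1 - 2^(-α) := by linarith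
  have hK : (0:ℝ) < 2^(1/p) / (1 - 2^(-α)) :=
    div_pos (Real.rpow_pos_of_pos two_pos _) hden
  have hcsds : ∀ n, cs n < ds n := by
    intro n
    have h1 := hlen n
    have h2n : (0:ℝ) < 2^n := pow_pos two_pos n
    nlinarith [div_pos hL h2n]
  have hd0 : ds 0 = t := by
    have h1 := hlen 0
    rw [h0] at h1
    simp at h1
    linarith
  have hsubIcc : ∀ n, Icc (cs n) (ds n) ⊆ Icc s t := by
    intro n
    induction n with
    | zero => rw [h0, hd0]
    | succ k ih => exact (hnest k).trans ih
  have hcle : ∀ n, cs n ≤ cs (n+1) :=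
    fun n => ((hnest n) (left_mem_Icc.2 (hcsds (n+1)).le)).1
  have hdle : ∀ n, ds (n+1) ≤ ds n :=
    fun n => ((hnest n) (right_mem_Icc.2 (hcsds (n+1)).le)).2
  have hIccsub01 : Icc s t ⊆ Icc (0:ℝ) 1 := Icc_subset_Icc hs ht
  by_cases hFtop : (∫⁻ x in Icc s t ×ˢ Icc s t, G h δ p x) = ⊤
  · rw [hFtop, ENNReal.top_rpow_of_pos (by positivity), ENNReal.mul_top (by
      rw [Ne, ENNReal.ofReal_eq_zero, not_le]
      exact mul_pos hK (Real.rpow_pos_of_pos hL _))]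
    exact le_top
  have hΦ0 : (0:ℝ) ≤ (∫⁻ x in Icc s t ×ˢ Icc s t, G h δ p x).toReal := ENNReal.toReal_nonneg
  set Φ := (∫⁻ x in Icc s t ×ˢ Icc s t, G h δ p x).toReal with hΦdef
  have hFr : (∫⁻ x in Icc s t ×ˢ Icc s t, G h δ p x) = ENNReal.ofReal Φ :=
    (ENNReal.ofReal_toReal hFtop).symm
  -- single step estimate, in real form
  have step_re : ∀ n : ℕ, |mean h (cs (n+1)) (ds (n+1)) - mean h (cs n) (ds n)| ≤
      2^(1/p) * ((2:ℝ)^(-α))^n * ((t - s)^α * Φ^(1/p)) := by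
    intro n
    have hA0 : (0:ℝ) < ds (n+1) - cs (n+1) := sub_pos.2 (hcsds (n+1))
    have hB0 : (0:ℝ) < ds n - cs n := sub_pos.2 (hcsds n)
    have hE := step h hcont hδ hp (hcle n) (hdle n) (hcsds (n+1)) (hcsds n)
      (hsubIcc n (left_mem_Icc.2 (hcsds n).le)).1
      (hsubIcc n (right_mem_Icc.2 (hcsds n).le)).2 hs ht
    have hC0 : (0:ℝ) ≤ (ds n - cs n) ^ ((1 + δ*p)/p) *
        ((ds (n+1) - cs (n+1)) * (ds n - cs n)) ^ (-(1/p)) := by positivity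
    rw [hFr, ENNReal.ofReal_rpow_of_nonneg hΦ0 (by positivity),
      ← ENNReal.ofReal_mul hC0] at hE
    have hre := (ENNReal.ofReal_le_ofReal_iff (by positivity)).1 hE
    rw [abs_sub_comm]
    refine hre.trans ?_
    rw [hlen n, hlen (n+1)]
    have h2n : (0:ℝ) < 2^n := pow_pos two_pos n
    have h2n1 : (0:ℝ) < 2^(n+1) := pow_pos two_pos (n+1)
    have hx1 : (0:ℝ) < (t-s)/2^n := div_pos hL h2n
    have hx2 : (0:ℝ) < (t-s)/2^(n+1) := div_pos hL h2n1
    have keyc : ((t-s)/2^n) ^ ((1 + δ*p)/p) *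
        (((t-s)/2^(n+1)) * ((t-s)/2^n)) ^ (-(1/p)) =
        2^(1/p) * ((2:ℝ)^(-α))^n * (t-s)^α := by
      have hlpos : (0:ℝ) < ((t-s)/2^n) ^ ((1 + δ*p)/p) *
          (((t-s)/2^(n+1)) * ((t-s)/2^n)) ^ (-(1/p)) := by positivity
      have hrpos : (0:ℝ) < 2^(1/p) * ((2:ℝ)^(-α))^n * (t-s)^α := by positivity
      have hlog : Real.log (((t-s)/2^n) ^ ((1 + δ*p)/p) *
          (((t-s)/2^(n+1)) * ((t-s)/2^n)) ^ (-(1/p))) =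
          Real.log (2^(1/p) * ((2:ℝ)^(-α))^n * (t-s)^α) := by
        rw [Real.log_mul (by positivity) (by positivity),
          Real.log_rpow hx1, Real.log_rpow (by positivity),
          Real.log_mul (by positivity) (by positivity),
          Real.log_mul (by positivity) (by positivity),
          Real.log_mul (by positivity) (by positivity),
          Real.log_div (by positivity) (by positivity),
          Real.log_div (by positivity) (by positivity),
          Real.log_pow, Real.log_pow, Real.log_pow,
          Real.log_rpow two_pos, Real.log_rpow two_pos, Real.log_rpow hL]
        subst hα
        push_cast
        field_simp
        ring
      calc ((t-s)/2^n) ^ ((1 + δ*p)/p) * (((t-s)/2^(n+1)) * ((t-s)/2^n)) ^ (-(1/p))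
          = Real.exp (Real.log (((t-s)/2^n) ^ ((1 + δ*p)/p) *
              (((t-s)/2^(n+1)) * ((t-s)/2^n)) ^ (-(1/p)))) := (Real.exp_log hlpos).symm
        _ = Real.exp (Real.log (2^(1/p) * ((2:ℝ)^(-α))^n * (t-s)^α)) := by rw [hlog]
        _ = 2^(1/p) * ((2:ℝ)^(-α))^n * (t-s)^α := Real.exp_log hrpos
    rw [keyc]
    apply le_of_eq
    ring
  -- telescoping estimate
  have tele : ∀ N : ℕ, |mean h (cs N) (ds N) - mean h s t| ≤
      2^(1/p) / (1 - 2^(-α)) * ((t-s)^α * Φ^(1/p)) := by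
    intro N
    have h1 : mean h (cs N) (ds N) - mean h s t =
        ∑ i ∈ Finset.range N, (mean h (cs (i+1)) (ds (i+1)) - mean h (cs i) (ds i)) := by
      rw [Finset.sum_range_sub (fun i => mean h (cs i) (ds i)) N, h0, hd0]
    rw [h1]
    refine (Finset.abs_sum_le_sum_abs _ _).trans ?_
    refine (Finset.sum_le_sum (fun i _ => step_re i)).trans ?_
    have hgs : ∑ i ∈ Finset.range N, ((2:ℝ)^(-α))^i ≤ (1 - 2^(-α))⁻¹ := by
      rw [geom_sum_eq (ne_of_lt hr01) N,
        show ((2:ℝ)^(-α))^N - 1 = -(1 - ((2:ℝ)^(-α))^N) by ring,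
        show (2:ℝ)^(-α) - 1 = -(1 - (2:ℝ)^(-α)) by ring, neg_div_neg_eq, ← one_div]
      apply div_le_div_of_nonneg_right _ hden.le
      nlinarith [pow_nonneg hr0.le N]
    calc ∑ i ∈ Finset.range N, 2^(1/p) * ((2:ℝ)^(-α))^i * ((t-s)^α * Φ^(1/p))
        = (∑ i ∈ Finset.range N, ((2:ℝ)^(-α))^i) * (2^(1/p) * ((t-s)^α * Φ^(1/p))) := by
          rw [Finset.sum_mul]
          exact Finset.sum_congr rfl (fun i _ => by ring)
      _ ≤ (1 - 2^(-α))⁻¹ * (2^(1/p) * ((t-s)^α * Φ^(1/p))) :=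
          mul_le_mul_of_nonneg_right hgs (by positivity)
      _ = 2^(1/p) / (1 - 2^(-α)) * ((t-s)^α * Φ^(1/p)) := by ring
  -- pass to the limit
  have main : |h w - mean h s t| ≤ 2^(1/p) / (1 - 2^(-α)) * ((t-s)^α * Φ^(1/p)) := by
    refine le_of_forall_pos_le_add ?_
    intro ε hε
    have hw01 : w ∈ Icc (0:ℝ) 1 := hIccsub01 (hsubIcc 0 (hw 0))
    obtain ⟨η, hη, hball⟩ := Metric.continuousOn_iff.1 hcont w hw01 ε hε
    obtain ⟨N, hN⟩ := exists_pow_lt_of_lt_one (div_pos hη hL) (by norm_num : (1:ℝ)/2 < 1)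
    have h2N : (0:ℝ) < 2^N := pow_pos two_pos N
    have hlenN : (t-s)/2^N < η := by
      have e : (t-s)/2^N = (1/2:ℝ)^N * (t-s) := by
        rw [one_div, inv_pow]
        ring
      rw [e]
      calc (1/2:ℝ)^N * (t-s) < η/(t-s) * (t-s) :=
            mul_lt_mul_of_pos_right hN hL
        _ = η := by field_simp
    have hsmall : ∀ x ∈ Icc (cs N) (ds N), |h x - h w| ≤ ε := by
      intro x hx
      have hx01 : x ∈ Icc (0:ℝ) 1 := hIccsub01 (hsubIcc N hx)
      have hdist : dist x w < η := by
        rw [Real.dist_eq, abs_sub_lt_iff]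
        have e1 := hx.1
        have e2 := hx.2
        have e3 := (hw N).1
        have e4 := (hw N).2
        have e5 := hlen N
        constructor <;> linarith
      have := hball x hx01 hdist
      rw [Real.dist_eq] at this
      exact this.le
    have hintN : IntegrableOn h (Icc (cs N) (ds N)) :=
      (hcont.mono ((hsubIcc N).trans hIccsub01)).integrableOn_compact isCompact_Icc
    have hmc := mean_close h (hcsds N) (hw N) hintN hε.le hsmall
    calc |h w - mean h s t|
        ≤ |h w - mean h (cs N) (ds N)| + |mean h (cs N) (ds N) - mean h s t| :=
          abs_sub_le _ _ _
      _ ≤ ε + 2^(1/p) / (1 - 2^(-α)) * ((t-s)^α * Φ^(1/p)) :=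
          add_le_add (by rw [abs_sub_comm]; exact hmc) (tele N)
      _ = 2^(1/p) / (1 - 2^(-α)) * ((t-s)^α * Φ^(1/p)) + ε := add_comm _ _
  rw [hFr, ENNReal.ofReal_rpow_of_nonneg hΦ0 (by positivity),
    ← ENNReal.ofReal_mul (by positivity)]
  exact ENNReal.ofReal_le_ofReal (le_of_le_of_eq main (by ring))

lemma grr (h : ℝ → ℝ) (hcont : ContinuousOn h (Icc 0 1)) {δ p α : ℝ} (hδ : 0 < δ)
    (hp : 1 ≤ p) (hα : α = δ - 1/p) (hα0 : 0 < α)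
    {s t : ℝ} (hst : s < t) (hs : 0 ≤ s) (ht : t ≤ 1) :
    ENNReal.ofReal |h t - h s| ≤
      ENNReal.ofReal (2 * ((2:ℝ)^(1/p) / (1 - 2^(-α))) * (t-s)^α) *
        (∫⁻ x in Icc s t ×ˢ Icc s t, G h δ p x) ^ (1/p) := by
  have hL : (0:ℝ) < t - s := sub_pos.2 hst
  have hr01 : (2:ℝ)^(-α) < 1 :=
    Real.rpow_lt_one_of_one_lt_of_neg one_lt_two (by linarith)
  have hden : (0:ℝ) < 1 - 2^(-α) := by linarith
  have hx0 : (0:ℝ) ≤ (2:ℝ)^(1/p) / (1 - 2^(-α)) * (t-s)^α := by positivity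
  have hp2 : ∀ n : ℕ, (0:ℝ) < 2^n := fun n => pow_pos two_pos n
  have hdiv : ∀ n : ℕ, (0:ℝ) ≤ (t-s)/2^n := fun n => (div_pos hL (hp2 n)).le
  have hmono : ∀ n : ℕ, (t-s)/2^(n+1) ≤ (t-s)/2^n := fun n =>
    div_le_div_of_nonneg_left hL.le (hp2 n)
      (pow_le_pow_right₀ (by norm_num : (1:ℝ) ≤ 2) (Nat.le_succ n))
  have c1 := chain h hcont hδ hp hα hα0 hst hs ht
    (fun n => t - (t-s)/2^n) (fun _ => t)
    (fun n => by ring)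
    (fun n => Icc_subset_Icc (by have := hmono n; linarith) le_rfl)
    (by simp)
    (fun n => ⟨by have := hdiv n; linarith, le_refl t⟩)
  have c2 := chain h hcont hδ hp hα hα0 hst hs ht
    (fun _ => s) (fun n => s + (t-s)/2^n)
    (fun n => by ring)
    (fun n => Icc_subset_Icc le_rfl (by have := hmono n; linarith))
    rfl
    (fun n => ⟨le_refl s, by have := hdiv n; linarith⟩)
  calc ENNReal.ofReal |h t - h s|
      ≤ ENNReal.ofReal (|h t - mean h s t| + |mean h s t - h s|) :=
        ENNReal.ofReal_le_ofReal (abs_sub_le _ _ _)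
    _ ≤ ENNReal.ofReal |h t - mean h s t| + ENNReal.ofReal |mean h s t - h s| :=
        ENNReal.ofReal_add_le
    _ ≤ ENNReal.ofReal ((2:ℝ)^(1/p) / (1 - 2^(-α)) * (t-s)^α) *
          (∫⁻ x in Icc s t ×ˢ Icc s t, G h δ p x) ^ (1/p) +
        ENNReal.ofReal ((2:ℝ)^(1/p) / (1 - 2^(-α)) * (t-s)^α) *
          (∫⁻ x in Icc s t ×ˢ Icc s t, G h δ p x) ^ (1/p) :=
        add_le_add c1 (by rw [abs_sub_comm]; exact c2)
    _ = ENNReal.ofReal (2 * ((2:ℝ)^(1/p) / (1 - 2^(-α))) * (t-s)^α) *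
          (∫⁻ x in Icc s t ×ˢ Icc s t, G h δ p x) ^ (1/p) := by
        rw [← add_mul, ← ENNReal.ofReal_add hx0 hx0]
        congr 2
        ring

lemma sq_ae (x y : ℝ) (hxy : x ≤ y) :
    (Icc x y ×ˢ Icc x y : Set (ℝ × ℝ)) =ᵐ[volume] (Ico x y ×ˢ Ico x y) := by
  have h1 : volume {z : ℝ × ℝ | z.1 = y} = 0 := by
    have e : {z : ℝ × ℝ | z.1 = y} = ({y} : Set ℝ) ×ˢ (univ : Set ℝ) := by
      ext z
      simp only [mem_setOf_eq, Set.mem_prod, mem_singleton_iff, mem_univ, and_true]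
    rw [e, Measure.volume_eq_prod, Measure.prod_prod]
    simp
  have h2 : volume {z : ℝ × ℝ | z.2 = y} = 0 := by
    have e : {z : ℝ × ℝ | z.2 = y} = (univ : Set ℝ) ×ˢ ({y} : Set ℝ) := by
      ext z
      simp only [mem_setOf_eq, Set.mem_prod, mem_singleton_iff, mem_univ, true_and]
    rw [e, Measure.volume_eq_prod, Measure.prod_prod]
    simp
  rw [MeasureTheory.ae_eq_set]
  constructor
  · refine measure_mono_null ?_ (measure_union_null h1 h2)
    intro z hz
    obtain ⟨⟨⟨h1a, h1b⟩, h2a, h2b⟩, hnot⟩ := hz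
    by_contra hcon
    simp only [mem_union, mem_setOf_eq, not_or] at hcon
    exact hnot ⟨⟨h1a, lt_of_le_of_ne h1b hcon.1⟩, ⟨h2a, lt_of_le_of_ne h2b hcon.2⟩⟩
  · rw [Set.diff_eq_empty.2 (prod_mono Ico_subset_Icc_self Ico_subset_Icc_self)]
    exact measure_empty

end GRRaux

open MeasureTheory

/-- `q`-variation embedding: `|h|_{q-var;[a,b]} ≤ C (b-a)^α |h|_{W^{δ,p};[a,b]}`,
with `α = δ - 1/p > 0`, `q = 1/δ`; the `q`-variation is the supremum over partitions. -/
theorem stmt_5 (δ p α q : ℝ) (hδ : 0 < δ) (hδ1 : δ < 1) (hp : 1 ≤ p)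
    (hα : α = δ - 1/p) (hα0 : 0 < α) (hq : q = 1/δ) :
    ∃ C : ℝ, 0 < C ∧ ∀ h : ℝ → ℝ, ContinuousOn h (Set.Icc 0 1) →
      ∀ a b, 0 ≤ a → a < b → b ≤ 1 →
      ∀ n : ℕ, ∀ t : Fin (n + 1) → ℝ, Monotone t →
        t 0 = a → t (Fin.last n) = b → (∀ i, t i ∈ Set.Icc a b) →
        ENNReal.ofReal ((∑ i : Fin n, |h (t i.succ) - h (t i.castSucc)| ^ q) ^ (1/q)) ≤
          ENNReal.ofReal (C * (b - a) ^ α) *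
          (∫⁻ x in Set.Icc a b ×ˢ Set.Icc a b,
              ENNReal.ofReal (|h x.2 - h x.1| ^ p / |x.2 - x.1| ^ (1 + δ * p))) ^ (1/p) := by
  have hp0 : (0:ℝ) < p := lt_of_lt_of_le one_pos hp
  have hq0 : (0:ℝ) < q := by rw [hq]; positivity
  have hαq : α * q = 1 - 1/(δ*p) := by
    rw [hα, hq]
    field_simp
  have hαq0 : 0 < α * q := mul_pos hα0 hq0
  have hαq1 : α * q < 1 := by
    rw [hαq]
    have hpos : 0 < 1/(δ*p) := by positivity
    linarith
  have hconj : (1/(α*q)).HolderConjugate (δ*p) := by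
    rw [Real.holderConjugate_iff]
    constructor
    · rw [lt_div_iff₀ hαq0, one_mul]
      exact hαq1
    · rw [one_div, inv_inv, hαq]
      ring
  have hqp : q/p = 1/(δ*p) := by
    rw [hq]
    field_simp
  have hr01 : (2:ℝ)^(-α) < 1 := Real.rpow_lt_one_of_one_lt_of_neg one_lt_two (by linarith)
  have hden : (0:ℝ) < 1 - 2^(-α) := by linarith
  have hC0 : (0:ℝ) < 2 * ((2:ℝ)^(1/p) / (1 - 2^(-α))) := by positivity
  refine ⟨2 * ((2:ℝ)^(1/p) / (1 - 2^(-α))), hC0, ?_⟩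
  intro h hcont a b ha hab hb n t htm ht0 htl htmem
  have hLba : (0:ℝ) < b - a := sub_pos.2 hab
  by_cases hFtop : (∫⁻ x in Set.Icc a b ×ˢ Set.Icc a b,
      ENNReal.ofReal (|h x.2 - h x.1| ^ p / |x.2 - x.1| ^ (1 + δ * p))) = ⊤
  · rw [hFtop, ENNReal.top_rpow_of_pos (by positivity), ENNReal.mul_top (by
      rw [Ne, ENNReal.ofReal_eq_zero, not_le]
      exact mul_pos hC0 (Real.rpow_pos_of_pos hLba _))]
    exact le_top
  have hΦ0 : (0:ℝ) ≤ (∫⁻ x in Set.Icc a b ×ˢ Set.Icc a b,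
      ENNReal.ofReal (|h x.2 - h x.1| ^ p / |x.2 - x.1| ^ (1 + δ * p))).toReal :=
    ENNReal.toReal_nonneg
  set Φ := (∫⁻ x in Set.Icc a b ×ˢ Set.Icc a b,
      ENNReal.ofReal (|h x.2 - h x.1| ^ p / |x.2 - x.1| ^ (1 + δ * p))).toReal with hΦdef
  have hFr : (∫⁻ x in Set.Icc a b ×ˢ Set.Icc a b,
      ENNReal.ofReal (|h x.2 - h x.1| ^ p / |x.2 - x.1| ^ (1 + δ * p))) = ENNReal.ofReal Φ :=
    (ENNReal.ofReal_toReal hFtop).symm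
  have hmle : ∀ i : Fin n, t i.castSucc ≤ t i.succ := fun i => htm (Fin.castSucc_lt_succ (i := i)).le
  have hmem0 : ∀ j : Fin (n+1), t j ∈ Set.Icc (0:ℝ) 1 := fun j =>
    ⟨le_trans ha (htmem j).1, le_trans (htmem j).2 hb⟩
  set Ψ : Fin n → ℝ := fun i => (∫⁻ x in Set.Icc (t i.castSucc) (t i.succ) ×ˢ
      Set.Icc (t i.castSucc) (t i.succ), GRRaux.G h δ p x).toReal with hΨdef
  have hΨ0 : ∀ i, 0 ≤ Ψ i := fun i => ENNReal.toReal_nonneg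
  have hFi_le : ∀ i : Fin n, (∫⁻ x in Set.Icc (t i.castSucc) (t i.succ) ×ˢ
      Set.Icc (t i.castSucc) (t i.succ), GRRaux.G h δ p x) ≤
      ∫⁻ x in Set.Icc a b ×ˢ Set.Icc a b,
        ENNReal.ofReal (|h x.2 - h x.1| ^ p / |x.2 - x.1| ^ (1 + δ * p)) := fun i =>
    lintegral_mono_set (Set.prod_mono
      (Set.Icc_subset_Icc (htmem _).1 (htmem _).2) (Set.Icc_subset_Icc (htmem _).1 (htmem _).2))
  have hFi_ne : ∀ i : Fin n, (∫⁻ x in Set.Icc (t i.castSucc) (t i.succ) ×ˢ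
      Set.Icc (t i.castSucc) (t i.succ), GRRaux.G h δ p x) ≠ ⊤ :=
    fun i => ne_top_of_le_ne_top hFtop (hFi_le i)
  -- per-increment estimate
  have key1 : ∀ i : Fin n, |h (t i.succ) - h (t i.castSucc)| ^ q ≤
      (2 * ((2:ℝ)^(1/p) / (1 - 2^(-α))))^q *
        ((t i.succ - t i.castSucc) ^ (α*q) * (Ψ i) ^ (q/p)) := by
    intro i
    rcases eq_or_lt_of_le (hmle i) with heq | hlt
    · have hz : |h (t i.succ) - h (t i.castSucc)| = 0 := by
        rw [← heq, sub_self, abs_zero]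
      rw [hz, Real.zero_rpow hq0.ne']
      have hΔ0 : (0:ℝ) ≤ t i.succ - t i.castSucc := sub_nonneg.2 (hmle i)
      exact mul_nonneg (by positivity)
        (mul_nonneg (Real.rpow_nonneg hΔ0 _) (Real.rpow_nonneg (hΨ0 i) _))
    · have hΔ0 : (0:ℝ) ≤ t i.succ - t i.castSucc := sub_nonneg.2 (hmle i)
      have hgrr := GRRaux.grr h hcont hδ hp hα hα0 hlt (hmem0 i.castSucc).1 (hmem0 i.succ).2
      rw [show (∫⁻ x in Set.Icc (t i.castSucc) (t i.succ) ×ˢ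
            Set.Icc (t i.castSucc) (t i.succ), GRRaux.G h δ p x) = ENNReal.ofReal (Ψ i) from
          (ENNReal.ofReal_toReal (hFi_ne i)).symm,
        ENNReal.ofReal_rpow_of_nonneg (hΨ0 i) (by positivity),
        ← ENNReal.ofReal_mul (by positivity)] at hgrr
      have hre := (ENNReal.ofReal_le_ofReal_iff (by positivity)).1 hgrr
      have h2 := Real.rpow_le_rpow (abs_nonneg _) hre hq0.le
      refine h2.trans (le_of_eq ?_)
      rw [Real.mul_rpow (by positivity) (by positivity),
        Real.mul_rpow (by positivity) (by positivity),
        ← Real.rpow_mul hΔ0, ← Real.rpow_mul (hΨ0 i),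
        show (1/p) * q = q/p by ring]
      ring
  -- Hölder inequality over the partition
  have key2 : ∑ i : Fin n, ((t i.succ - t i.castSucc) ^ (α*q) * (Ψ i) ^ (q/p)) ≤
      (∑ i : Fin n, (t i.succ - t i.castSucc)) ^ (α*q) * (∑ i : Fin n, Ψ i) ^ (q/p) := by
    have H := Real.inner_le_Lp_mul_Lq_of_nonneg (s := Finset.univ) hconj
      (f := fun i : Fin n => (t i.succ - t i.castSucc) ^ (α*q))
      (g := fun i : Fin n => (Ψ i) ^ (q/p))
      (fun i _ => Real.rpow_nonneg (sub_nonneg.2 (hmle i)) _)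
      (fun i _ => Real.rpow_nonneg (hΨ0 i) _)
    have e1 : ∑ i : Fin n, (((t i.succ - t i.castSucc) ^ (α*q)) ^ (1/(α*q))) =
        ∑ i : Fin n, (t i.succ - t i.castSucc) :=
      Finset.sum_congr rfl (fun i _ => by
        rw [← Real.rpow_mul (sub_nonneg.2 (hmle i)), mul_one_div_cancel hαq0.ne',
          Real.rpow_one])
    have e2 : ∑ i : Fin n, (((Ψ i) ^ (q/p)) ^ (δ*p)) = ∑ i : Fin n, Ψ i :=
      Finset.sum_congr rfl (fun i _ => by
        rw [← Real.rpow_mul (hΨ0 i), show q/p * (δ*p) = 1 by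
          rw [hq]; field_simp, Real.rpow_one])
    rw [e1, e2, one_div_one_div, ← hqp] at H
    exact H
  -- telescoping sum of increments
  have key5 : ∑ i : Fin n, (t i.succ - t i.castSucc) = b - a := by
    have e : ∀ i : Fin n, t i.succ - t i.castSucc =
        (fun k : ℕ => t ⟨min k n, Nat.lt_succ_of_le (min_le_right k n)⟩) (↑i+1) -
        (fun k : ℕ => t ⟨min k n, Nat.lt_succ_of_le (min_le_right k n)⟩) ↑i := by
      intro i
      have h1 : (⟨min ((i:ℕ)+1) n, Nat.lt_succ_of_le (min_le_right _ n)⟩ : Fin (n+1)) = i.succ := by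
        apply Fin.ext
        simp [Nat.min_eq_left (Nat.succ_le_of_lt i.isLt)]
      have h2 : (⟨min (i:ℕ) n, Nat.lt_succ_of_le (min_le_right _ n)⟩ : Fin (n+1)) = i.castSucc := by
        apply Fin.ext
        simp [Nat.min_eq_left (le_of_lt i.isLt)]
      show t i.succ - t i.castSucc =
        t ⟨min ((i:ℕ)+1) n, Nat.lt_succ_of_le (min_le_right _ n)⟩ -
        t ⟨min (i:ℕ) n, Nat.lt_succ_of_le (min_le_right _ n)⟩
      rw [h1, h2]
    rw [Finset.sum_congr rfl (fun i _ => e i),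
      Fin.sum_univ_eq_sum_range (fun k =>
        (fun k : ℕ => t ⟨min k n, Nat.lt_succ_of_le (min_le_right k n)⟩) (k+1) -
        (fun k : ℕ => t ⟨min k n, Nat.lt_succ_of_le (min_le_right k n)⟩) k) n,
      Finset.sum_range_sub (fun k : ℕ => t ⟨min k n, Nat.lt_succ_of_le (min_le_right k n)⟩) n]
    have h3 : (⟨min n n, Nat.lt_succ_of_le (min_le_right n n)⟩ : Fin (n+1)) = Fin.last n := by
      apply Fin.ext
      simp
    have h4 : (⟨min 0 n, Nat.lt_succ_of_le (min_le_right 0 n)⟩ : Fin (n+1)) = 0 := by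
      apply Fin.ext
      simp
    show t ⟨min n n, Nat.lt_succ_of_le (min_le_right n n)⟩ -
      t ⟨min 0 n, Nat.lt_succ_of_le (min_le_right 0 n)⟩ = b - a
    rw [h3, h4, htl, ht0]
  -- superadditivity of the double integral over disjoint squares
  have key4 : ∑ i : Fin n, Ψ i ≤ Φ := by
    have hdisj : Pairwise (Function.onFun Disjoint (fun i : Fin n =>
        (Ico (t i.castSucc) (t i.succ) ×ˢ Ico (t i.castSucc) (t i.succ) : Set (ℝ × ℝ)))) := by
      have key : ∀ i j : Fin n, i < j →
          Disjoint (Ico (t i.castSucc) (t i.succ)) (Ico (t j.castSucc) (t j.succ)) := by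
        intro i j hij
        apply Set.Ico_disjoint_Ico.2
        have hle : t i.succ ≤ t j.castSucc := htm (by
          rw [Fin.le_def]
          simp only [Fin.val_succ, Fin.coe_castSucc]
          exact hij)
        exact le_trans (min_le_left _ _) (le_trans hle (le_max_right _ _))
      intro i j hij
      rcases lt_or_gt_of_ne hij with hlt | hgt
      · apply Set.disjoint_left.2
        intro z hz1 hz2
        exact Set.disjoint_left.1 (key i j hlt) hz1.1 hz2.1
      · apply Set.disjoint_left.2
        intro z hz1 hz2
        exact Set.disjoint_left.1 (key j i hgt) hz2.1 hz1.1
    have hsum : ∑ i : Fin n, (∫⁻ x in Set.Icc (t i.castSucc) (t i.succ) ×ˢ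
        Set.Icc (t i.castSucc) (t i.succ), GRRaux.G h δ p x) ≤
        ∫⁻ x in Set.Icc a b ×ˢ Set.Icc a b,
          ENNReal.ofReal (|h x.2 - h x.1| ^ p / |x.2 - x.1| ^ (1 + δ * p)) := by
      calc ∑ i : Fin n, (∫⁻ x in Set.Icc (t i.castSucc) (t i.succ) ×ˢ
            Set.Icc (t i.castSucc) (t i.succ), GRRaux.G h δ p x)
          = ∑ i : Fin n, (∫⁻ x in Ico (t i.castSucc) (t i.succ) ×ˢ
              Ico (t i.castSucc) (t i.succ), GRRaux.G h δ p x) :=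
            Finset.sum_congr rfl (fun i _ =>
              setLIntegral_congr (GRRaux.sq_ae _ _ (hmle i)))
        _ = ∑' i : Fin n, (∫⁻ x in Ico (t i.castSucc) (t i.succ) ×ˢ
              Ico (t i.castSucc) (t i.succ), GRRaux.G h δ p x) := (tsum_fintype _).symm
        _ = ∫⁻ x in ⋃ i : Fin n, (Ico (t i.castSucc) (t i.succ) ×ˢ
              Ico (t i.castSucc) (t i.succ) : Set (ℝ × ℝ)), GRRaux.G h δ p x :=
            (lintegral_iUnion (fun i => measurableSet_Ico.prod measurableSet_Ico) hdisj _).symm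
        _ ≤ ∫⁻ x in Set.Icc a b ×ˢ Set.Icc a b, GRRaux.G h δ p x :=
            lintegral_mono_set (Set.iUnion_subset (fun i => Set.prod_mono
              (Ico_subset_Icc_self.trans (Set.Icc_subset_Icc (htmem _).1 (htmem _).2))
              (Ico_subset_Icc_self.trans (Set.Icc_subset_Icc (htmem _).1 (htmem _).2))))
    calc ∑ i : Fin n, Ψ i
        = (∑ i : Fin n, (∫⁻ x in Set.Icc (t i.castSucc) (t i.succ) ×ˢ
            Set.Icc (t i.castSucc) (t i.succ), GRRaux.G h δ p x)).toReal := by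
          rw [ENNReal.toReal_sum (fun i _ => hFi_ne i)]
      _ ≤ Φ := ENNReal.toReal_mono hFtop hsum
  -- combine everything
  have main : ∑ i : Fin n, |h (t i.succ) - h (t i.castSucc)| ^ q ≤
      (2 * ((2:ℝ)^(1/p) / (1 - 2^(-α))))^q * ((b-a)^(α*q) * Φ^(q/p)) := by
    calc ∑ i : Fin n, |h (t i.succ) - h (t i.castSucc)| ^ q
        ≤ ∑ i : Fin n, (2 * ((2:ℝ)^(1/p) / (1 - 2^(-α))))^q *
            ((t i.succ - t i.castSucc) ^ (α*q) * (Ψ i) ^ (q/p)) :=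
          Finset.sum_le_sum (fun i _ => key1 i)
      _ = (2 * ((2:ℝ)^(1/p) / (1 - 2^(-α))))^q *
            ∑ i : Fin n, ((t i.succ - t i.castSucc) ^ (α*q) * (Ψ i) ^ (q/p)) := by
          rw [← Finset.mul_sum]
      _ ≤ (2 * ((2:ℝ)^(1/p) / (1 - 2^(-α))))^q *
            ((∑ i : Fin n, (t i.succ - t i.castSucc)) ^ (α*q) * (∑ i : Fin n, Ψ i) ^ (q/p)) :=
          mul_le_mul_of_nonneg_left key2 (by positivity)
      _ ≤ (2 * ((2:ℝ)^(1/p) / (1 - 2^(-α))))^q * ((b-a)^(α*q) * Φ^(q/p)) := by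
          rw [key5]
          refine mul_le_mul_of_nonneg_left ?_ (by positivity)
          refine mul_le_mul_of_nonneg_left ?_ (by positivity)
          exact Real.rpow_le_rpow (Finset.sum_nonneg (fun i _ => hΨ0 i)) key4 (by positivity)
  rw [hFr, ENNReal.ofReal_rpow_of_nonneg hΦ0 (by positivity),
    ← ENNReal.ofReal_mul (by positivity)]
  apply ENNReal.ofReal_le_ofReal
  have hfin := Real.rpow_le_rpow (Finset.sum_nonneg
    (fun (i : Fin n) _ => Real.rpow_nonneg (abs_nonneg _) q)) main (by positivity : (0:ℝ) ≤ 1/q)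
  refine hfin.trans (le_of_eq ?_)
  rw [Real.mul_rpow (x := (2 * ((2:ℝ)^(1/p) / (1 - 2^(-α))))^q)
      (y := (b-a)^(α*q) * Φ^(q/p)) (by positivity) (by positivity),
    Real.mul_rpow (x := (b-a)^(α*q)) (y := Φ^(q/p)) (by positivity) (by positivity),
    ← Real.rpow_mul hC0.le, mul_one_div_cancel hq0.ne', Real.rpow_one,
    ← Real.rpow_mul hLba.le, ← Real.rpow_mul hΦ0,
    show α * q * (1/q) = α by field_simp,
    show q/p * (1/q) = 1/p by field_simp]
  ring
end

section
/- (Garsia–Rodemich–Rumsey estimate, special case) Let p > 1, 0 < δ < 1 with δ - 1/p > 0. There exists C > 0 such that for every continuous f : [0,1] → ℝ and all 0 ≤ s < t ≤ 1, |f(t) - f(s)| ≤ C (∫∫_{[s,t]^2} |f(v) - f(u)|^p / |v-u|^{1+δp} du dv)^{1/p} · (t-s)^{δ - 1/p}. -/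
open MeasureTheory Filter Topology Set
open scoped ENNReal

lemma grr_aux (p δ : ℝ) (hp : 1 < p) (hδ : 0 < δ) (hα : 0 < δ - 1/p)
    (f : ℝ → ℝ) (s t : ℝ) (hst : s < t) (hf : ContinuousOn f (Set.Icc s t))
    (B : ℝ≥0∞) (hBfin : B ≠ ⊤)
    (hB : (∫⁻ x in Set.Icc s t ×ˢ Set.Icc s t,
        ENNReal.ofReal (|f x.2 - f x.1| ^ p / |x.2 - x.1| ^ (1 + δ * p))) ≤ B) :
    |f t - (t - s)⁻¹ * ∫ x in Set.Icc s t, f x| ≤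
      2 ^ (1/p) * (1 - 2 ^ (-(δ - 1/p)))⁻¹ * B.toReal ^ (1/p) * (t - s) ^ (δ - 1/p) := by
  have hp0 : 0 < p := lt_trans zero_lt_one hp
  have hts : 0 < t - s := sub_pos.2 hst
  set α : ℝ := δ - 1/p with hαdef
  set K : ℝ := B.toReal with hKdef
  have hK0 : 0 ≤ K := ENNReal.toReal_nonneg
  set L : ℕ → ℝ := fun n => (t - s) / 2 ^ n with hLdef
  have hL0 : ∀ n, 0 < L n := fun n => div_pos hts (by positivity)
  set a : ℕ → ℝ := fun n => t - L n with hadef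
  have haS : ∀ n, s ≤ a n := by
    intro n
    have h1 : L n ≤ t - s := by
      rw [hLdef]
      calc (t - s) / 2 ^ n ≤ (t - s) / 1 := by
            apply div_le_div_of_nonneg_left hts.le one_pos (one_le_pow₀ one_le_two)
        _ = t - s := div_one _
    simp only [hadef]; linarith
  have haT : ∀ n, a n < t := fun n => by simp only [hadef]; linarith [hL0 n]
  set A : ℕ → ℝ := fun n => (L n)⁻¹ * ∫ x in Set.Icc (a n) t, f x with hAdef
  -- the key one-step estimate
  have hq' : p.HolderConjugate p.conjExponent := Real.HolderConjugate.conjExponent hp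
  set q' : ℝ := p.conjExponent with hq'def
  have hq'inv : 1/q' = 1 - 1/p := by
    have := hq'.inv_add_inv_eq_one
    rw [one_div, one_div]; linarith
  have hδp : (0:ℝ) < 1 + δ * p := by positivity
  have hstep : ∀ n : ℕ, |A (n+1) - A n| ≤ 2 ^ (1/p) * K ^ (1/p) * (L n) ^ α := by
    intro n
    set ℓ : ℝ := L n with hℓdef
    have hℓ0 : 0 < ℓ := hL0 n
    have hhalf : L (n+1) = ℓ / 2 := by
      rw [hℓdef, hLdef]; simp only [pow_succ]; ring
    have haa : a n ≤ a (n+1) := by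
      rw [hadef]; simp only [hhalf, hℓdef]; linarith
    set I : Set ℝ := Set.Icc (a n) t with hIdef
    set J : Set ℝ := Set.Icc (a (n+1)) t with hJdef
    have hIsub : I ⊆ Set.Icc s t := Set.Icc_subset_Icc (haS n) le_rfl
    have hJI : J ⊆ I := Set.Icc_subset_Icc haa le_rfl
    have htaI : t - a n = ℓ := by rw [hadef, hℓdef]; ring
    have htaJ : t - a (n+1) = ℓ/2 := by simp only [hadef]; rw [hhalf]; ring
    have hvolI : volume I = ENNReal.ofReal ℓ := by rw [hIdef, Real.volume_Icc, htaI]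
    have hvolJ : volume J = ENNReal.ofReal (ℓ/2) := by rw [hJdef, Real.volume_Icc, htaJ]
    have hvolIR : (volume I).toReal = ℓ := by rw [hvolI, ENNReal.toReal_ofReal hℓ0.le]
    have hvolJR : (volume J).toReal = ℓ/2 := by
      rw [hvolJ, ENNReal.toReal_ofReal (by positivity)]
    have hfI : IntegrableOn f I := (hf.mono hIsub).integrableOn_Icc
    have hfJ : IntegrableOn f J := hfI.mono_set hJI
    have hIconst : IntegrableOn (fun _ : ℝ => (∫ y in I, f y)) J := by
      refine integrableOn_const ?_; rw [hvolJ]; exact ENNReal.ofReal_ne_top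
    have hgc : ContinuousOn (fun q : ℝ × ℝ => f q.1 - f q.2) (J ×ˢ I) := by
      apply ContinuousOn.sub
      · exact (hf.mono (hJI.trans hIsub)).comp continuousOn_fst (fun q hq => hq.1)
      · exact (hf.mono hIsub).comp continuousOn_snd (fun q hq => hq.2)
    have hScompact : IsCompact (J ×ˢ I) := (isCompact_Icc).prod isCompact_Icc
    have hSmeas : MeasurableSet (J ×ˢ I) := measurableSet_Icc.prod measurableSet_Icc
    have hgint : IntegrableOn (fun q : ℝ × ℝ => f q.1 - f q.2) (J ×ˢ I) :=
      hgc.integrableOn_compact hScompact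
    -- Fubini computation of the double integral
    have hD : (∫ q in J ×ˢ I, (f q.1 - f q.2)) = ℓ * (∫ x in J, f x) - ℓ/2 * ∫ y in I, f y := by
      rw [Measure.volume_eq_prod] at hgint ⊢
      rw [setIntegral_prod _ hgint]
      have hinner : ∀ x : ℝ, (∫ y in I, (f x - f y)) = ℓ * f x - ∫ y in I, f y := by
        intro x
        rw [integral_sub (integrableOn_const (C := f x) (by rw [hvolI]; exact ENNReal.ofReal_ne_top)) hfI,
          setIntegral_const, measureReal_def, hvolIR, smul_eq_mul]
      calc (∫ x in J, ∫ y in I, (f x - f y))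
          = ∫ x in J, (ℓ * f x - ∫ y in I, f y) := by
            exact integral_congr_ae (Eventually.of_forall fun x => hinner x)
        _ = (∫ x in J, ℓ * f x) - ∫ _ in J, (∫ y in I, f y) :=
            integral_sub (hfJ.const_mul ℓ) hIconst
        _ = ℓ * (∫ x in J, f x) - ℓ/2 * ∫ y in I, f y := by
            rw [integral_const_mul, setIntegral_const, measureReal_def, hvolJR, smul_eq_mul]
    have hℓne : ℓ ≠ 0 := hℓ0.ne'
    have hdiff : A (n+1) - A n = 2/(ℓ*ℓ) * ∫ q in J ×ˢ I, (f q.1 - f q.2) := by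
      have hA1 : A (n+1) = (ℓ/2)⁻¹ * ∫ x in J, f x := by
        simp only [hAdef]; rw [hhalf, ← hJdef]
      have hA2 : A n = ℓ⁻¹ * ∫ x in I, f x := by
        simp only [hAdef]; rfl
      rw [hD, hA1, hA2]
      field_simp
    -- bound by the integral of the absolute value
    set R : ℝ := ∫ q in J ×ˢ I, |f q.1 - f q.2| with hRdef
    have hR0 : 0 ≤ R := setIntegral_nonneg hSmeas fun x _ => abs_nonneg _
    have habs : |A (n+1) - A n| ≤ 2/(ℓ*ℓ) * R := by
      rw [hdiff, abs_mul, abs_of_nonneg (by positivity : (0:ℝ) ≤ 2/(ℓ*ℓ))]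
      apply mul_le_mul_of_nonneg_left _ (by positivity : (0:ℝ) ≤ 2/(ℓ*ℓ))
      rw [hRdef]
      have := norm_integral_le_integral_norm (μ := volume.restrict (J ×ˢ I))
        (f := fun q : ℝ × ℝ => f q.1 - f q.2)
      simpa [Real.norm_eq_abs] using this
    -- the ENNReal-valued Hölder estimate
    set G : ℝ × ℝ → ℝ≥0∞ := fun q => ENNReal.ofReal |f q.1 - f q.2| with hGdef
    set W : ℝ × ℝ → ℝ≥0∞ :=
      fun x => ENNReal.ofReal (|f x.2 - f x.1| ^ p / |x.2 - x.1| ^ (1 + δ * p)) with hWdef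
    have hGmeas : AEMeasurable G (volume.restrict (J ×ˢ I)) :=
      ENNReal.measurable_ofReal.comp_aemeasurable ((hgc.abs).aemeasurable hSmeas)
    have hofR : ENNReal.ofReal R = ∫⁻ q in J ×ˢ I, G q := by
      rw [hRdef]
      exact ofReal_integral_eq_lintegral_ofReal hgint.abs
        (Eventually.of_forall fun x => abs_nonneg _)
    have hholder : ∫⁻ q in J ×ˢ I, G q ≤
        (∫⁻ q in J ×ˢ I, G q ^ p) ^ (1/p) * (volume (J ×ˢ I)) ^ (1/q') := by
      have h := ENNReal.lintegral_mul_le_Lp_mul_Lq (volume.restrict (J ×ˢ I)) hq'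
        hGmeas (aemeasurable_const (b := (1:ℝ≥0∞)))
      simp only [Pi.mul_apply, mul_one, ENNReal.one_rpow, lintegral_const, one_mul,
        Measure.restrict_apply_univ] at h
      exact h
    have hptwise : ∀ q ∈ J ×ˢ I, G q ^ p ≤ ENNReal.ofReal (ℓ ^ (1 + δ*p)) * W q := by
      rintro ⟨x, y⟩ ⟨hx, hy⟩
      have hGp : G (x, y) ^ p = ENNReal.ofReal (|f x - f y| ^ p) := by
        rw [hGdef]; exact ENNReal.ofReal_rpow_of_nonneg (abs_nonneg _) hp0.le
      rw [hGp, hWdef]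
      rw [← ENNReal.ofReal_mul (by positivity)]
      apply ENNReal.ofReal_le_ofReal
      rw [abs_sub_comm (f x) (f y)]
      rcases eq_or_ne x y with h | h
      · subst h
        rw [sub_self, abs_zero, Real.zero_rpow hp0.ne']
        positivity
      · have hxy0 : 0 < |y - x| := abs_pos.2 (sub_ne_zero.2 (Ne.symm h))
        have hxI : x ∈ I := hJI hx
        have hxyℓ : |y - x| ≤ ℓ := by
          rw [abs_sub_le_iff]
          constructor
          · linarith [hy.2, hxI.1, htaI]
          · linarith [hy.1, hxI.2, htaI]
        have hne : |y - x| ^ (1 + δ*p) ≠ 0 := (Real.rpow_pos_of_pos hxy0 _).ne'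
        show |f y - f x| ^ p ≤ ℓ ^ (1 + δ*p) * (|f y - f x| ^ p / |y - x| ^ (1 + δ*p))
        calc |f y - f x| ^ p
            = |y - x| ^ (1 + δ*p) * (|f y - f x| ^ p / |y - x| ^ (1 + δ*p)) := by
              rw [mul_comm, div_mul_cancel₀ _ hne]
          _ ≤ ℓ ^ (1 + δ*p) * (|f y - f x| ^ p / |y - x| ^ (1 + δ*p)) :=
              mul_le_mul_of_nonneg_right
                (Real.rpow_le_rpow (abs_nonneg _) hxyℓ hδp.le) (by positivity)
    have hLp : ∫⁻ q in J ×ˢ I, G q ^ p ≤ ENNReal.ofReal (ℓ ^ (1 + δ*p)) * B := by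
      calc ∫⁻ q in J ×ˢ I, G q ^ p
          ≤ ∫⁻ q in J ×ˢ I, ENNReal.ofReal (ℓ ^ (1 + δ*p)) * W q := by
            apply lintegral_mono_ae
            filter_upwards [ae_restrict_mem hSmeas] with q hq
            exact hptwise q hq
        _ = ENNReal.ofReal (ℓ ^ (1 + δ*p)) * ∫⁻ q in J ×ˢ I, W q :=
            lintegral_const_mul' _ _ ENNReal.ofReal_ne_top
        _ ≤ ENNReal.ofReal (ℓ ^ (1 + δ*p)) * B := by
            apply mul_le_mul_right
            refine le_trans (lintegral_mono_set ?_) hB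
            exact Set.prod_mono (hJI.trans hIsub) hIsub
    have hvolS : volume (J ×ˢ I) = ENNReal.ofReal (ℓ/2 * ℓ) := by
      rw [Measure.volume_eq_prod, Measure.prod_prod, hvolJ, hvolI,
        ← ENNReal.ofReal_mul (by positivity)]
    have hcomb : ENNReal.ofReal R ≤
        (ENNReal.ofReal (ℓ ^ (1 + δ*p)) * B) ^ (1/p) * (ENNReal.ofReal (ℓ/2 * ℓ)) ^ (1/q') := by
      rw [hofR, ← hvolS]
      refine le_trans hholder ?_
      apply mul_le_mul_left
      exact ENNReal.rpow_le_rpow hLp (one_div_nonneg.2 hp0.le)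
    -- pass back to the reals
    have hfinR : (ENNReal.ofReal (ℓ ^ (1 + δ*p)) * B) ^ (1/p) *
        (ENNReal.ofReal (ℓ/2 * ℓ)) ^ (1/q') ≠ ⊤ := by
      apply ENNReal.mul_ne_top
      · exact ENNReal.rpow_ne_top_of_nonneg (one_div_nonneg.2 hp0.le)
          (ENNReal.mul_ne_top ENNReal.ofReal_ne_top hBfin)
      · exact ENNReal.rpow_ne_top_of_nonneg hq'.symm.one_div_nonneg ENNReal.ofReal_ne_top
    have hRle : R ≤ (ℓ ^ (1 + δ*p) * K) ^ (1/p) * (ℓ/2 * ℓ) ^ (1/q') := by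
      have h1 := ENNReal.toReal_mono hfinR hcomb
      rw [ENNReal.toReal_ofReal hR0] at h1
      refine le_trans h1 (le_of_eq ?_)
      rw [ENNReal.toReal_mul, ← ENNReal.toReal_rpow, ← ENNReal.toReal_rpow,
        ENNReal.toReal_mul, ENNReal.toReal_ofReal (by positivity),
        ENNReal.toReal_ofReal (by positivity), ← hKdef]
    -- final algebra
    have halg : 2/(ℓ*ℓ) * ((ℓ ^ (1 + δ*p) * K) ^ (1/p) * (ℓ/2 * ℓ) ^ (1/q')) =
        2 ^ (1/p) * K ^ (1/p) * ℓ ^ α := by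
      rw [hq'inv]
      have hb : (ℓ/2*ℓ) = ℓ*ℓ/2 := by ring
      have hll : ℓ * ℓ = ℓ ^ (2:ℝ) := by
        rw [show (2:ℝ) = ((2:ℕ):ℝ) by norm_num, Real.rpow_natCast]; ring
      have e2 : (ℓ/2*ℓ) ^ (1-1/p) = ℓ^(1-1/p) * ℓ^(1-1/p) / 2^(1-1/p) := by
        rw [hb, Real.div_rpow (by positivity) (by norm_num), Real.mul_rpow hℓ0.le hℓ0.le]
      have e3 : (ℓ ^ (1 + δ*p) * K) ^ (1/p) = ℓ^((1+δ*p)*(1/p)) * K^(1/p) := by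
        rw [Real.mul_rpow (by positivity) hK0, Real.rpow_mul hℓ0.le]
      rw [e2, e3]
      have e4 : (2:ℝ)/2^(1-1/p) = 2^(1/p) := by
        have h24 : (2:ℝ)^((1:ℝ) - (1-1/p)) = 2^(1:ℝ)/2^(1-1/p) := Real.rpow_sub two_pos _ _
        calc (2:ℝ)/2^(1-1/p) = 2^(1:ℝ)/2^(1-1/p) := by rw [Real.rpow_one]
          _ = 2^((1:ℝ) - (1-1/p)) := h24.symm
          _ = 2^(1/p) := by congr 1; ring
      have e5 : ℓ^((1+δ*p)*(1/p)) * ℓ^(1-1/p) * ℓ^(1-1/p) / (ℓ*ℓ) = ℓ ^ α := by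
        rw [← Real.rpow_add hℓ0, ← Real.rpow_add hℓ0, hll, ← Real.rpow_sub hℓ0]
        congr 1
        rw [hαdef]
        field_simp
        ring
      calc 2/(ℓ*ℓ) * ((ℓ^((1+δ*p)*(1/p)) * K^(1/p)) * (ℓ^(1-1/p) * ℓ^(1-1/p) / 2^(1-1/p)))
          = (2/2^(1-1/p)) * K^(1/p) *
              (ℓ^((1+δ*p)*(1/p)) * ℓ^(1-1/p) * ℓ^(1-1/p) / (ℓ*ℓ)) := by ring
        _ = 2 ^ (1/p) * K ^ (1/p) * ℓ ^ α := by rw [e4, e5]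
    calc |A (n+1) - A n| ≤ 2/(ℓ*ℓ) * R := habs
      _ ≤ 2/(ℓ*ℓ) * ((ℓ ^ (1 + δ*p) * K) ^ (1/p) * (ℓ/2 * ℓ) ^ (1/q')) :=
          mul_le_mul_of_nonneg_left hRle (by positivity)
      _ = 2 ^ (1/p) * K ^ (1/p) * ℓ ^ α := halg
  -- A n tends to f t
  have hlim : Tendsto A atTop (𝓝 (f t)) := by
    rw [Metric.tendsto_atTop]
    intro ε hε
    have hct : ContinuousWithinAt f (Set.Icc s t) t :=
      hf t (Set.right_mem_Icc.2 hst.le)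
    rw [Metric.continuousWithinAt_iff] at hct
    obtain ⟨η, hη0, hη⟩ := hct (ε/2) (by linarith)
    have hLto : Tendsto L atTop (𝓝 0) := by
      have h2 : Tendsto (fun n : ℕ => (t - s) * (2⁻¹ : ℝ) ^ n) atTop (𝓝 ((t-s) * 0)) :=
        (tendsto_pow_atTop_nhds_zero_of_lt_one (by norm_num) (by norm_num)).const_mul _
      rw [mul_zero] at h2
      have : L = fun n : ℕ => (t - s) * (2⁻¹ : ℝ) ^ n := by
        funext n; rw [hLdef]; rw [inv_pow]; ring
      rw [this]; exact h2
    obtain ⟨N, hN⟩ := Filter.eventually_atTop.1 (hLto.eventually (gt_mem_nhds hη0))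
    refine ⟨N, fun n hn => ?_⟩
    have hLη : L n < η := hN n hn
    have hsub : Set.Icc (a n) t ⊆ Set.Icc s t := Set.Icc_subset_Icc (haS n) le_rfl
    have hint : IntegrableOn f (Set.Icc (a n) t) := (hf.mono hsub).integrableOn_Icc
    have hta : t - a n = L n := by rw [hadef]; ring
    have hvol : volume (Set.Icc (a n) t) = ENNReal.ofReal (L n) := by
      rw [Real.volume_Icc, hta]
    have hvolR : (volume (Set.Icc (a n) t)).toReal = L n := by
      rw [hvol, ENNReal.toReal_ofReal (hL0 n).le]
    have hAn : A n - f t = (L n)⁻¹ * ∫ x in Set.Icc (a n) t, (f x - f t) := by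
      rw [integral_sub hint (integrableOn_const (by rw [hvol]; exact ENNReal.ofReal_ne_top)),
        setIntegral_const, measureReal_def, hvolR, hAdef]
      simp only [smul_eq_mul]
      field_simp
      rw [sub_div, mul_div_cancel_left₀ _ (hL0 n).ne']
    have hbound : ‖∫ x in Set.Icc (a n) t, (f x - f t)‖ ≤ ε/2 * L n := by
      rw [← hvolR]
      apply norm_setIntegral_le_of_norm_le_const (by rw [hvol]; exact ENNReal.ofReal_lt_top)
      intro x hx
      rw [Real.norm_eq_abs]
      refine (hη (hsub hx) ?_).le
      rw [Real.dist_eq, abs_sub_lt_iff]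
      constructor
      · linarith [hx.2]
      · have := hx.1; rw [hadef] at this; simp only at this; linarith
    rw [Real.dist_eq, hAn, abs_mul, abs_of_nonneg (inv_nonneg.2 (hL0 n).le)]
    calc (L n)⁻¹ * |∫ x in Set.Icc (a n) t, (f x - f t)|
        ≤ (L n)⁻¹ * (ε/2 * L n) := by
          apply mul_le_mul_of_nonneg_left _ (inv_nonneg.2 (hL0 n).le)
          rw [← Real.norm_eq_abs]; exact hbound
      _ = ε/2 := by rw [mul_comm, mul_assoc, mul_inv_cancel₀ (hL0 n).ne', mul_one]
      _ < ε := by linarith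
  -- A 0 is the average
  have hA0 : A 0 = (t - s)⁻¹ * ∫ x in Set.Icc s t, f x := by
    simp only [hAdef, hLdef, hadef, pow_zero, div_one, sub_sub_cancel]
  set r : ℝ := 2 ^ (-α) with hrdef
  have hr0 : 0 < r := Real.rpow_pos_of_pos two_pos _
  have hr1 : r < 1 := by
    rw [hrdef]
    exact Real.rpow_lt_one_of_one_lt_of_neg one_lt_two (neg_neg_of_pos hα)
  have hgeom : ∀ N : ℕ, ∑ n ∈ Finset.range N, r ^ n ≤ (1 - r)⁻¹ := by
    intro N
    rw [geom_sum_eq (ne_of_lt hr1)]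
    have hrN : 0 ≤ r ^ N := pow_nonneg hr0.le N
    have h1 : (r ^ N - 1) / (r - 1) = (1 - r ^ N) / (1 - r) := by
      rw [div_eq_div_iff (by linarith) (by linarith)]; ring
    rw [h1, div_le_iff₀ (by linarith : (0:ℝ) < 1 - r),
      inv_mul_cancel₀ (by linarith : (1:ℝ) - r ≠ 0)]
    linarith
  have hLpow : ∀ n : ℕ, (L n) ^ α = (t - s) ^ α * r ^ n := by
    intro n
    rw [hLdef, hrdef]
    rw [Real.div_rpow hts.le (by positivity)]
    rw [← Real.rpow_natCast (2:ℝ) n, ← Real.rpow_mul (by norm_num), ← Real.rpow_natCast (2 ^ (-α) : ℝ) n,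
      ← Real.rpow_mul (by norm_num)]
    rw [div_eq_mul_inv, ← Real.rpow_neg (by norm_num)]
    ring_nf
  -- partial sums bound
  have hpart : ∀ N : ℕ, |A N - A 0| ≤
      2 ^ (1/p) * K ^ (1/p) * (t - s) ^ α * (1 - r)⁻¹ := by
    intro N
    have h1 : A N - A 0 = ∑ n ∈ Finset.range N, (A (n+1) - A n) :=
      (Finset.sum_range_sub A N).symm
    rw [h1]
    calc |∑ n ∈ Finset.range N, (A (n+1) - A n)|
        ≤ ∑ n ∈ Finset.range N, |A (n+1) - A n| := Finset.abs_sum_le_sum_abs _ _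
      _ ≤ ∑ n ∈ Finset.range N, 2 ^ (1/p) * K ^ (1/p) * (L n) ^ α :=
          Finset.sum_le_sum fun n _ => hstep n
      _ = 2 ^ (1/p) * K ^ (1/p) * (t - s) ^ α * ∑ n ∈ Finset.range N, r ^ n := by
          rw [Finset.mul_sum]; exact Finset.sum_congr rfl fun n _ => by rw [hLpow n]; ring
      _ ≤ 2 ^ (1/p) * K ^ (1/p) * (t - s) ^ α * (1 - r)⁻¹ := by
          apply mul_le_mul_of_nonneg_left (hgeom N)
          positivity
  have hfinal : |f t - A 0| ≤ 2 ^ (1/p) * K ^ (1/p) * (t - s) ^ α * (1 - r)⁻¹ := by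
    have : Tendsto (fun N => |A N - A 0|) atTop (𝓝 |f t - A 0|) :=
      ((hlim.sub tendsto_const_nhds).abs)
    exact le_of_tendsto this (Eventually.of_forall hpart)
  rw [hA0] at hfinal
  calc |f t - (t - s)⁻¹ * ∫ x in Set.Icc s t, f x|
      ≤ 2 ^ (1/p) * K ^ (1/p) * (t - s) ^ α * (1 - r)⁻¹ := hfinal
    _ = 2 ^ (1/p) * (1 - r)⁻¹ * K ^ (1/p) * (t - s) ^ α := by ring

/-- Garsia–Rodemich–Rumsey estimate, special case `Ψ(x) = x^p`, `p(u) = u^{1/p+δ}`. -/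
theorem stmt_6 (p δ : ℝ) (hp : 1 < p) (hδ : 0 < δ) (hδ1 : δ < 1)
    (hα : 0 < δ - 1/p) :
    ∃ C : ℝ, 0 < C ∧ ∀ f : ℝ → ℝ, ContinuousOn f (Set.Icc 0 1) →
      ∀ s t, 0 ≤ s → s < t → t ≤ 1 →
        ENNReal.ofReal |f t - f s| ≤
          ENNReal.ofReal C *
          (∫⁻ x in Set.Icc s t ×ˢ Set.Icc s t,
              ENNReal.ofReal (|f x.2 - f x.1| ^ p / |x.2 - x.1| ^ (1 + δ * p))) ^ (1/p) *
          ENNReal.ofReal ((t - s) ^ (δ - 1/p)) := by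
  have hp0 : 0 < p := lt_trans zero_lt_one hp
  have hr1 : (2:ℝ) ^ (-(δ - 1/p)) < 1 :=
    Real.rpow_lt_one_of_one_lt_of_neg one_lt_two (neg_neg_of_pos hα)
  have hr2 : (0:ℝ) < 1 - 2 ^ (-(δ - 1/p)) := by linarith
  have hc1 : (0:ℝ) < 2 ^ (1/p) * (1 - 2 ^ (-(δ - 1/p)))⁻¹ := by positivity
  refine ⟨2 * (2 ^ (1/p) * (1 - 2 ^ (-(δ - 1/p)))⁻¹), by positivity, ?_⟩
  intro f hf s t hs hst ht1
  set c1 : ℝ := 2 ^ (1/p) * (1 - 2 ^ (-(δ - 1/p)))⁻¹ with hc1def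
  set B : ℝ≥0∞ := ∫⁻ x in Set.Icc s t ×ˢ Set.Icc s t,
      ENNReal.ofReal (|f x.2 - f x.1| ^ p / |x.2 - x.1| ^ (1 + δ * p)) with hBdef
  have hsub : Set.Icc s t ⊆ Set.Icc (0:ℝ) 1 := Set.Icc_subset_Icc hs ht1
  have hfc : ContinuousOn f (Set.Icc s t) := hf.mono hsub
  have hts : 0 < t - s := sub_pos.2 hst
  have htspow : 0 < (t - s) ^ (δ - 1/p) := Real.rpow_pos_of_pos hts _
  by_cases hBfin : B = ⊤
  · have h1 : ENNReal.ofReal (2 * c1) ≠ 0 := (ENNReal.ofReal_pos.2 (by positivity)).ne'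
    have h2 : ENNReal.ofReal ((t-s)^(δ-1/p)) ≠ 0 := (ENNReal.ofReal_pos.2 htspow).ne'
    rw [hBfin, ENNReal.top_rpow_of_pos (by positivity : (0:ℝ) < 1/p),
      ENNReal.mul_top h1, ENNReal.top_mul h2]
    exact le_top
  · set c : ℝ := s + t with hcdef
    set F : ℝ → ℝ := fun x => f (c - x) with hFdef
    have hFc : ContinuousOn F (Set.Icc s t) := by
      apply hfc.comp ((continuous_const.sub continuous_id).continuousOn)
      intro x hx
      have h1 := hx.1; have h2 := hx.2
      constructor <;> simp only [Function.id_def, Pi.sub_apply] <;> linarith [hcdef.le, hcdef.ge]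
    set W : ℝ × ℝ → ℝ≥0∞ :=
      fun x => ENNReal.ofReal (|f x.2 - f x.1| ^ p / |x.2 - x.1| ^ (1 + δ * p)) with hWdef
    set T : ℝ × ℝ → ℝ × ℝ := fun x => (c - x.1, c - x.2) with hTdef
    have hTmp : MeasurePreserving T volume volume := by
      rw [Measure.volume_eq_prod]
      exact (Measure.measurePreserving_sub_left volume c).prod
        (Measure.measurePreserving_sub_left volume c)
    have hTemb : MeasurableEmbedding T :=
      ((Homeomorph.subLeft c).prodCongr (Homeomorph.subLeft c)).measurableEmbedding
    have hpre : T ⁻¹' (Set.Icc s t ×ˢ Set.Icc s t) = Set.Icc s t ×ˢ Set.Icc s t := by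
      ext x
      simp only [Set.mem_preimage, Set.mem_prod, Set.mem_Icc, hTdef]
      constructor <;> rintro ⟨⟨h1, h2⟩, h3, h4⟩ <;>
        exact ⟨⟨by linarith [hcdef.le, hcdef.ge], by linarith [hcdef.le, hcdef.ge]⟩,
          ⟨by linarith [hcdef.le, hcdef.ge], by linarith [hcdef.le, hcdef.ge]⟩⟩
    have hcomp : ∀ x : ℝ × ℝ,
        ENNReal.ofReal (|F x.2 - F x.1| ^ p / |x.2 - x.1| ^ (1 + δ * p)) = W (T x) := by
      intro x
      simp only [hWdef, hFdef, hTdef]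
      congr 2
      rw [show (c - x.2) - (c - x.1) = x.1 - x.2 by ring, abs_sub_comm (x.1) (x.2)]
    have hBF : (∫⁻ x in Set.Icc s t ×ˢ Set.Icc s t,
        ENNReal.ofReal (|F x.2 - F x.1| ^ p / |x.2 - x.1| ^ (1 + δ * p))) ≤ B := by
      have e1 : (∫⁻ x in Set.Icc s t ×ˢ Set.Icc s t,
          ENNReal.ofReal (|F x.2 - F x.1| ^ p / |x.2 - x.1| ^ (1 + δ * p)))
          = ∫⁻ x in T ⁻¹' (Set.Icc s t ×ˢ Set.Icc s t), W (T x) := by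
        rw [hpre]
        exact lintegral_congr fun x => hcomp x
      rw [e1, hTmp.setLIntegral_comp_preimage_emb hTemb W _]
    have est1 := grr_aux p δ hp hδ hα f s t hst hfc B hBfin (le_of_eq hBdef.symm)
    have est2 := grr_aux p δ hp hδ hα F s t hst hFc B hBfin hBF
    have hFt : F t = f s := by
      simp only [hFdef, hcdef]; congr 1; ring
    have havg : (∫ x in Set.Icc s t, F x) = ∫ x in Set.Icc s t, f x := by
      rw [integral_Icc_eq_integral_Ioc, integral_Icc_eq_integral_Ioc,
        ← intervalIntegral.integral_of_le hst.le, ← intervalIntegral.integral_of_le hst.le]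
      simp only [hFdef]
      rw [intervalIntegral.integral_comp_sub_left f c]
      rw [show c - t = s by simp only [hcdef]; ring, show c - s = t by simp only [hcdef]; ring]
    rw [hFt, havg] at est2
    set Av : ℝ := (t - s)⁻¹ * ∫ x in Set.Icc s t, f x with hAvdef
    have hKpow : (0:ℝ) ≤ B.toReal ^ (1/p) := by positivity
    have htri : |f t - f s| ≤ 2 * c1 * B.toReal ^ (1/p) * (t-s)^(δ-1/p) := by
      calc |f t - f s| = |(f t - Av) + (Av - f s)| := by congr 1; ring
        _ ≤ |f t - Av| + |Av - f s| := abs_add_le _ _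
        _ = |f t - Av| + |f s - Av| := by rw [abs_sub_comm Av (f s)]
        _ ≤ c1 * B.toReal ^ (1/p) * (t-s)^(δ-1/p) + c1 * B.toReal ^ (1/p) * (t-s)^(δ-1/p) :=
            add_le_add est1 est2
        _ = 2 * c1 * B.toReal ^ (1/p) * (t-s)^(δ-1/p) := by ring
    have hBp : B ^ (1/p) ≠ ⊤ := ENNReal.rpow_ne_top_of_nonneg (by positivity) hBfin
    have hRHS : ENNReal.ofReal (2 * c1 * B.toReal ^ (1/p) * (t-s)^(δ-1/p)) =
        ENNReal.ofReal (2 * c1) * B ^ (1/p) * ENNReal.ofReal ((t-s)^(δ-1/p)) := by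
      rw [ENNReal.ofReal_mul (by positivity : (0:ℝ) ≤ 2 * c1 * B.toReal ^ (1/p)),
        ENNReal.ofReal_mul (by positivity : (0:ℝ) ≤ 2 * c1)]
      congr 1
      rw [ENNReal.toReal_rpow, ENNReal.ofReal_toReal hBp]
    calc ENNReal.ofReal |f t - f s|
        ≤ ENNReal.ofReal (2 * c1 * B.toReal ^ (1/p) * (t-s)^(δ-1/p)) :=
          ENNReal.ofReal_le_ofReal htri
      _ = ENNReal.ofReal (2 * c1) * B ^ (1/p) * ENNReal.ofReal ((t-s)^(δ-1/p)) := hRHS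
end

section
/- Let H ∈ (0,1/2) and K_1(t,s) = (t-s)^{H-1/2} for 0 ≤ s < t ≤ 1 (and 0 otherwise). Then sup_{u ∈ [0,1]} ∫_0^{1-t} |K_1(s+t, u) - K_1(s, u)| ds = O(t^{H+1/2}) and sup_{s ∈ [0,1-t]} ∫_0^1 |K_1(s+t, u) - K_1(s, u)| du = O(t^{H+1/2}) as t → 0+. -/
open MeasureTheory intervalIntegral

private lemma stmt12_mrpow (r : ℝ) : Measurable (fun x : ℝ => x ^ r) :=
  measurable_of_continuousOn_compl_singleton 0 fun x hx =>
    (Real.continuousAt_rpow_const x r (Or.inl hx)).continuousWithinAt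

private lemma stmt12_meas (r c : ℝ) :
    Measurable (fun s : ℝ => if c < s then (s - c) ^ r else 0) := by
  refine Measurable.ite ?_ ((stmt12_mrpow r).comp (measurable_id.sub_const c)) measurable_const
  exact measurableSet_Ioi

private lemma stmt12_meas' (r c : ℝ) :
    Measurable (fun u : ℝ => if u < c then (c - u) ^ r else 0) := by
  refine Measurable.ite ?_ ((stmt12_mrpow r).comp (measurable_const.sub measurable_id))
    measurable_const
  exact measurableSet_Iio

private lemma stmt12_intable (H : ℝ) (h0 : 0 < H) (h1 : H < 1/2) (c a b : ℝ) :
    IntervalIntegrable (fun s : ℝ => if c < s then (s - c) ^ (H - 1/2) else 0) volume a b := by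
  have hr : (-1:ℝ) < H - 1/2 := by linarith
  have hg : IntervalIntegrable (fun s : ℝ => (s - c) ^ (H - 1/2)) volume a b := by
    have := (intervalIntegral.intervalIntegrable_rpow' (a := a - c) (b := b - c) hr).comp_sub_right c
    simpa using this
  refine hg.mono_fun ((stmt12_meas _ c).aestronglyMeasurable) (Filter.Eventually.of_forall fun x => ?_)
  by_cases h : c < x
  · simp [h]
  · simp only [if_neg h, norm_zero]; exact norm_nonneg _

private lemma stmt12_intable' (H : ℝ) (h0 : 0 < H) (h1 : H < 1/2) (c a b : ℝ) :
    IntervalIntegrable (fun u : ℝ => if u < c then (c - u) ^ (H - 1/2) else 0) volume a b := by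
  have hr : (-1:ℝ) < H - 1/2 := by linarith
  have hg : IntervalIntegrable (fun u : ℝ => (c - u) ^ (H - 1/2)) volume a b := by
    have := (intervalIntegral.intervalIntegrable_rpow' (a := c - a) (b := c - b) hr).comp_sub_left c
    simpa using this
  refine hg.mono_fun ((stmt12_meas' _ c).aestronglyMeasurable) (Filter.Eventually.of_forall fun x => ?_)
  by_cases h : x < c
  · simp [h]
  · simp only [if_neg h, norm_zero]; exact norm_nonneg _

private lemma stmt12_val (H : ℝ) (h0 : 0 < H) (h1 : H < 1/2) (c a b : ℝ) (hab : a ≤ b) :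
    ∫ s in a..b, (if c < s then (s - c) ^ (H - 1/2) else 0)
      = ((max (b - c) 0) ^ (H + 1/2) - (max (a - c) 0) ^ (H + 1/2)) / (H + 1/2) := by
  have hr : (-1:ℝ) < H - 1/2 := by linarith
  have hp : (0:ℝ) < H + 1/2 := by linarith
  have h0p : (0:ℝ) ^ (H + 1/2) = 0 := Real.zero_rpow (ne_of_gt hp)
  have hexp : H - 1/2 + 1 = H + 1/2 := by ring
  have base : ∀ a' b' : ℝ, c ≤ a' → a' ≤ b' →
      ∫ s in a'..b', (if c < s then (s - c) ^ (H - 1/2) else 0)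
        = ((b' - c) ^ (H + 1/2) - (a' - c) ^ (H + 1/2)) / (H + 1/2) := by
    intro a' b' hca hab'
    rw [intervalIntegral.integral_congr_ae (g := fun s => (s - c) ^ (H - 1/2))
      (Filter.Eventually.of_forall fun x hx => ?_)]
    · rw [intervalIntegral.integral_comp_sub_right (fun x => x ^ (H - 1/2)) c,
        integral_rpow (Or.inl hr), hexp]
    · rw [Set.uIoc_of_le hab'] at hx
      rw [if_pos (lt_of_le_of_lt hca hx.1)]
  have zero : ∀ a' b' : ℝ, a' ≤ b' → b' ≤ c →
      ∫ s in a'..b', (if c < s then (s - c) ^ (H - 1/2) else 0) = 0 := by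
    intro a' b' hab' hbc
    rw [intervalIntegral.integral_congr_ae (g := fun _ => (0:ℝ))
      (Filter.Eventually.of_forall fun x hx => ?_), intervalIntegral.integral_zero]
    rw [Set.uIoc_of_le hab'] at hx
    rw [if_neg (not_lt.mpr (hx.2.trans hbc))]
  rcases le_or_gt b c with hbc | hcb
  · rw [zero a b hab hbc, max_eq_right (by linarith : b - c ≤ 0),
      max_eq_right (by linarith : a - c ≤ 0), h0p]
    simp
  · rcases le_or_gt c a with hca | hac
    · rw [base a b hca hab, max_eq_left (by linarith : (0:ℝ) ≤ b - c),
        max_eq_left (by linarith : (0:ℝ) ≤ a - c)]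
    · rw [← intervalIntegral.integral_add_adjacent_intervals
        (stmt12_intable H h0 h1 c a c) (stmt12_intable H h0 h1 c c b),
        zero a c hac.le le_rfl, base c b le_rfl hcb.le,
        max_eq_left (by linarith : (0:ℝ) ≤ b - c), max_eq_right (by linarith : a - c ≤ 0),
        sub_self, h0p, zero_add]

private lemma stmt12_val' (H : ℝ) (h0 : 0 < H) (h1 : H < 1/2) (c a b : ℝ) (hab : a ≤ b) :
    ∫ u in a..b, (if u < c then (c - u) ^ (H - 1/2) else 0)
      = ((max (c - a) 0) ^ (H + 1/2) - (max (c - b) 0) ^ (H + 1/2)) / (H + 1/2) := by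
  have e : (fun u : ℝ => if u < c then (c - u) ^ (H - 1/2) else 0)
      = fun u => (fun s : ℝ => if -c < s then (s - -c) ^ (H - 1/2) else 0) (-u) := by
    funext u
    show (if u < c then (c - u) ^ (H - 1/2) else 0)
      = if -c < -u then (-u - -c) ^ (H - 1/2) else 0
    by_cases h : u < c
    · rw [if_pos h, if_pos (by linarith), show -u - -c = c - u by ring]
    · rw [if_neg h, if_neg (by intro hh; exact h (by linarith))]
  rw [e, intervalIntegral.integral_comp_neg
      (fun s : ℝ => if -c < s then (s - -c) ^ (H - 1/2) else 0),
    stmt12_val H h0 h1 (-c) (-b) (-a) (by linarith),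
    show -a - -c = c - a by ring, show -b - -c = c - b by ring]

/-- Increment estimates for the singular fBm Volterra kernel `K₁(t,s) = (t-s)^{H-1/2} 1_{s<t}`:
both `sup_u ∫₀^{1-t} |K₁(s+t,u)-K₁(s,u)| ds` and `sup_s ∫₀^1 |K₁(s+t,u)-K₁(s,u)| du`
are `O(t^{H+1/2})` as `t → 0⁺`. -/
theorem stmt_12 (H : ℝ) (h0 : 0 < H) (h1 : H < 1/2)
    (K₁ : ℝ → ℝ → ℝ)
    (hK : ∀ t s, K₁ t s = if s < t then (t - s) ^ (H - 1/2) else 0) :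
    ∃ C : ℝ, 0 < C ∧ ∀ t : ℝ, 0 < t → t < 1 →
      (∀ u ∈ Set.Icc (0:ℝ) 1,
        (∫ s in (0:ℝ)..(1 - t), |K₁ (s + t) u - K₁ s u|) ≤ C * t ^ (H + 1/2)) ∧
      (∀ s ∈ Set.Icc (0:ℝ) (1 - t),
        (∫ u in (0:ℝ)..1, |K₁ (s + t) u - K₁ s u|) ≤ C * t ^ (H + 1/2)) := by
  have hr0 : H - 1/2 ≤ 0 := by linarith
  have hp : (0:ℝ) < H + 1/2 := by linarith
  refine ⟨3 / (H + 1/2), by positivity, fun t ht ht1 => ?_⟩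
  have htp : (0:ℝ) ≤ t ^ (H + 1/2) := Real.rpow_nonneg ht.le _
  have mono : ∀ x y : ℝ, x ≤ y → max x 0 ^ (H + 1/2) ≤ max y 0 ^ (H + 1/2) := fun x y hxy =>
    Real.rpow_le_rpow (le_max_right _ _) (max_le_max hxy le_rfl) hp.le
  have nn : ∀ x : ℝ, 0 ≤ max x 0 ^ (H + 1/2) := fun x => Real.rpow_nonneg (le_max_right _ _) _
  have bt : ∀ x : ℝ, x ≤ t → max x 0 ^ (H + 1/2) ≤ t ^ (H + 1/2) := fun x hx =>
    Real.rpow_le_rpow (le_max_right _ _) (max_le hx ht.le) hp.le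
  have key : ∀ u s : ℝ, |K₁ (s + t) u - K₁ s u|
      = (K₁ s u - K₁ (s + t) u) + 2 * (if s ≤ u then K₁ (s + t) u else 0) := by
    intro u s
    simp only [hK]
    by_cases h1s : u < s
    · rw [if_pos h1s, if_pos (show u < s + t by linarith), if_neg (not_le.mpr h1s)]
      have hle : (s + t - u) ^ (H - 1/2) ≤ (s - u) ^ (H - 1/2) :=
        Real.rpow_le_rpow_of_nonpos (by linarith) (by linarith) hr0
      rw [abs_of_nonpos (by linarith)]
      ring
    · push_neg at h1s
      rw [if_neg (not_lt.mpr h1s), if_pos h1s]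
      by_cases h2s : u < s + t
      · rw [if_pos h2s, sub_zero, abs_of_nonneg (Real.rpow_nonneg (by linarith) _)]
        ring
      · rw [if_neg h2s]; simp
  constructor
  · rintro u ⟨hu0, hu1⟩
    have e2 : ∀ x : ℝ, (if u < x + t then (x + t - u) ^ (H - 1/2) else 0)
        = (if u - t < x then (x - (u - t)) ^ (H - 1/2) else 0) := by
      intro x
      by_cases h : u - t < x
      · rw [if_pos (show u < x + t by linarith), if_pos h, show x + t - u = x - (u - t) by ring]
      · rw [if_neg (fun hh => h (by linarith)), if_neg h]
    have ptw : ∀ x : ℝ, |K₁ (x + t) u - K₁ x u|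
        = (if u < x then (x - u) ^ (H - 1/2) else 0)
          - (if u - t < x then (x - (u - t)) ^ (H - 1/2) else 0)
          + 2 * (if x ≤ u then (if u - t < x then (x - (u - t)) ^ (H - 1/2) else 0) else 0) := by
      intro x
      rw [key u x]
      simp only [hK, e2]
    have Ig1 := stmt12_intable H h0 h1 u
    have Ig2 := stmt12_intable H h0 h1 (u - t)
    have Ih : ∀ a b : ℝ, IntervalIntegrable
        (fun x => if x ≤ u then (if u - t < x then (x - (u - t)) ^ (H - 1/2) else 0) else 0)
        volume a b := by
      intro a b
      refine (Ig2 a b).mono_fun ?_ (Filter.Eventually.of_forall fun x => ?_)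
      · exact (Measurable.ite measurableSet_Iic (stmt12_meas _ _)
          measurable_const).aestronglyMeasurable
      · by_cases h : x ≤ u
        · simp [h]
        · simp only [if_neg h, norm_zero]; exact norm_nonneg _
    have h1t : (0:ℝ) ≤ 1 - t := by linarith
    have step1 : (∫ x in (0:ℝ)..(1 - t), |K₁ (x + t) u - K₁ x u|)
        = ∫ x in (0:ℝ)..(1 - t),
            ((if u < x then (x - u) ^ (H - 1/2) else 0)
              - (if u - t < x then (x - (u - t)) ^ (H - 1/2) else 0)
              + 2 * (if x ≤ u then (if u - t < x then (x - (u - t)) ^ (H - 1/2) else 0) else 0)) :=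
      intervalIntegral.integral_congr fun x _ => ptw x
    have e1 : (∫ x in (0:ℝ)..(1 - t),
            ((if u < x then (x - u) ^ (H - 1/2) else 0)
              - (if u - t < x then (x - (u - t)) ^ (H - 1/2) else 0)
              + 2 * (if x ≤ u then (if u - t < x then (x - (u - t)) ^ (H - 1/2) else 0) else 0)))
        = ((∫ x in (0:ℝ)..(1 - t), (if u < x then (x - u) ^ (H - 1/2) else 0))
            - ∫ x in (0:ℝ)..(1 - t), (if u - t < x then (x - (u - t)) ^ (H - 1/2) else 0))
          + 2 * ∫ x in (0:ℝ)..(1 - t),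
              (if x ≤ u then (if u - t < x then (x - (u - t)) ^ (H - 1/2) else 0) else 0) := by
      rw [intervalIntegral.integral_add ((Ig1 0 (1 - t)).sub (Ig2 0 (1 - t)))
          ((Ih 0 (1 - t)).const_mul 2),
        intervalIntegral.integral_sub (Ig1 0 (1 - t)) (Ig2 0 (1 - t)),
        intervalIntegral.integral_const_mul]
    set m := min u (1 - t) with hm
    have hm0 : (0:ℝ) ≤ m := le_min hu0 h1t
    have hm1 : m ≤ 1 - t := min_le_right _ _
    have hmu : m ≤ u := min_le_left _ _
    have Eh : (∫ x in (0:ℝ)..(1 - t),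
          (if x ≤ u then (if u - t < x then (x - (u - t)) ^ (H - 1/2) else 0) else 0))
        = (max (m - (u - t)) 0 ^ (H + 1/2) - max (0 - (u - t)) 0 ^ (H + 1/2)) / (H + 1/2) := by
      rw [← intervalIntegral.integral_add_adjacent_intervals (Ih 0 m) (Ih m (1 - t))]
      have A : (∫ x in (0:ℝ)..m,
            (if x ≤ u then (if u - t < x then (x - (u - t)) ^ (H - 1/2) else 0) else 0))
          = ∫ x in (0:ℝ)..m, (if u - t < x then (x - (u - t)) ^ (H - 1/2) else 0) := by
        refine intervalIntegral.integral_congr fun x hx => ?_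
        rw [Set.uIcc_of_le hm0] at hx
        rw [if_pos (hx.2.trans hmu)]
      have B : (∫ x in m..(1 - t),
            (if x ≤ u then (if u - t < x then (x - (u - t)) ^ (H - 1/2) else 0) else 0)) = 0 := by
        rw [intervalIntegral.integral_congr_ae (g := fun _ => (0:ℝ))
          (Filter.Eventually.of_forall fun x hx => ?_), intervalIntegral.integral_zero]
        rw [Set.uIoc_of_le hm1] at hx
        have hux : u < x := by
          rcases le_total u (1 - t) with h | h
          · rw [hm, min_eq_left h] at hx; exact hx.1
          · rw [hm, min_eq_right h] at hx; exact absurd hx.2 (not_le.mpr hx.1)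
        rw [if_neg (not_le.mpr hux)]
      rw [A, B, stmt12_val H h0 h1 (u - t) 0 m hm0, add_zero]
    rw [step1, e1, Eh, stmt12_val H h0 h1 u 0 (1 - t) h1t,
      stmt12_val H h0 h1 (u - t) 0 (1 - t) h1t]
    have f1 : max (1 - t - u) 0 ^ (H + 1/2) ≤ max (1 - t - (u - t)) 0 ^ (H + 1/2) :=
      mono _ _ (by linarith)
    have f2 : 0 ≤ max (0 - u) 0 ^ (H + 1/2) := nn _
    have f3 : max (0 - (u - t)) 0 ^ (H + 1/2) ≤ t ^ (H + 1/2) := bt _ (by linarith)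
    have f4 : max (m - (u - t)) 0 ^ (H + 1/2) ≤ t ^ (H + 1/2) := bt _ (by linarith)
    have f5 : 0 ≤ max (0 - (u - t)) 0 ^ (H + 1/2) := nn _
    have comb : ((max (1 - t - u) 0 ^ (H + 1/2) - max (0 - u) 0 ^ (H + 1/2)) / (H + 1/2)
          - (max (1 - t - (u - t)) 0 ^ (H + 1/2) - max (0 - (u - t)) 0 ^ (H + 1/2)) / (H + 1/2))
          + 2 * ((max (m - (u - t)) 0 ^ (H + 1/2) - max (0 - (u - t)) 0 ^ (H + 1/2)) / (H + 1/2))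
        = (max (1 - t - u) 0 ^ (H + 1/2) - max (0 - u) 0 ^ (H + 1/2)
            - max (1 - t - (u - t)) 0 ^ (H + 1/2) + max (0 - (u - t)) 0 ^ (H + 1/2)
            + 2 * max (m - (u - t)) 0 ^ (H + 1/2)
            - 2 * max (0 - (u - t)) 0 ^ (H + 1/2)) / (H + 1/2) := by
      ring
    rw [comb, div_le_iff₀ hp,
      show 3 / (H + 1/2) * t ^ (H + 1/2) * (H + 1/2) = 3 * t ^ (H + 1/2) by field_simp]
    linarith
  · rintro s ⟨hs0, hs1⟩
    have hst1 : s + t ≤ 1 := by linarith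
    have ptw : ∀ x : ℝ, |K₁ (s + t) x - K₁ s x|
        = (if x < s then (s - x) ^ (H - 1/2) else 0)
          - (if x < s + t then (s + t - x) ^ (H - 1/2) else 0)
          + 2 * (if s ≤ x then (if x < s + t then (s + t - x) ^ (H - 1/2) else 0) else 0) := by
      intro x
      rw [key x s]
      simp only [hK]
    have IG1 := stmt12_intable' H h0 h1 s
    have IG2 := stmt12_intable' H h0 h1 (s + t)
    have Ih : ∀ a b : ℝ, IntervalIntegrable
        (fun x => if s ≤ x then (if x < s + t then (s + t - x) ^ (H - 1/2) else 0) else 0)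
        volume a b := by
      intro a b
      refine (IG2 a b).mono_fun ?_ (Filter.Eventually.of_forall fun x => ?_)
      · exact (Measurable.ite measurableSet_Ici (stmt12_meas' _ _)
          measurable_const).aestronglyMeasurable
      · by_cases h : s ≤ x
        · simp [h]
        · simp only [if_neg h, norm_zero]; exact norm_nonneg _
    have step1 : (∫ x in (0:ℝ)..1, |K₁ (s + t) x - K₁ s x|)
        = ∫ x in (0:ℝ)..1,
            ((if x < s then (s - x) ^ (H - 1/2) else 0)
              - (if x < s + t then (s + t - x) ^ (H - 1/2) else 0)
              + 2 * (if s ≤ x then (if x < s + t then (s + t - x) ^ (H - 1/2) else 0) else 0)) :=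
      intervalIntegral.integral_congr fun x _ => ptw x
    have e1 : (∫ x in (0:ℝ)..1,
            ((if x < s then (s - x) ^ (H - 1/2) else 0)
              - (if x < s + t then (s + t - x) ^ (H - 1/2) else 0)
              + 2 * (if s ≤ x then (if x < s + t then (s + t - x) ^ (H - 1/2) else 0) else 0)))
        = ((∫ x in (0:ℝ)..1, (if x < s then (s - x) ^ (H - 1/2) else 0))
            - ∫ x in (0:ℝ)..1, (if x < s + t then (s + t - x) ^ (H - 1/2) else 0))
          + 2 * ∫ x in (0:ℝ)..1,
              (if s ≤ x then (if x < s + t then (s + t - x) ^ (H - 1/2) else 0) else 0) := by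
      rw [intervalIntegral.integral_add ((IG1 0 1).sub (IG2 0 1)) ((Ih 0 1).const_mul 2),
        intervalIntegral.integral_sub (IG1 0 1) (IG2 0 1),
        intervalIntegral.integral_const_mul]
    have Eh : (∫ x in (0:ℝ)..1,
          (if s ≤ x then (if x < s + t then (s + t - x) ^ (H - 1/2) else 0) else 0))
        = (max (s + t - s) 0 ^ (H + 1/2) - max (s + t - (s + t)) 0 ^ (H + 1/2)) / (H + 1/2) := by
      rw [← intervalIntegral.integral_add_adjacent_intervals (Ih 0 (s + t)) (Ih (s + t) 1),
        ← intervalIntegral.integral_add_adjacent_intervals (Ih 0 s) (Ih s (s + t))]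
      have P1 : (∫ x in (0:ℝ)..s,
            (if s ≤ x then (if x < s + t then (s + t - x) ^ (H - 1/2) else 0) else 0)) = 0 := by
        have hae : ∀ᵐ x : ℝ, x ≠ s := by
          filter_upwards [MeasureTheory.compl_mem_ae_iff.mpr
            (MeasureTheory.measure_singleton (s : ℝ))] with x hx using hx
        rw [intervalIntegral.integral_congr_ae (g := fun _ => (0:ℝ)) ?_,
          intervalIntegral.integral_zero]
        filter_upwards [hae] with x hx hmem
        rw [Set.uIoc_of_le hs0] at hmem
        rw [if_neg (not_le.mpr (lt_of_le_of_ne hmem.2 hx))]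
      have P2 : (∫ x in s..(s + t),
            (if s ≤ x then (if x < s + t then (s + t - x) ^ (H - 1/2) else 0) else 0))
          = ∫ x in s..(s + t), (if x < s + t then (s + t - x) ^ (H - 1/2) else 0) := by
        refine intervalIntegral.integral_congr fun x hx => ?_
        rw [Set.uIcc_of_le (by linarith : s ≤ s + t)] at hx
        rw [if_pos hx.1]
      have P3 : (∫ x in (s + t)..(1:ℝ),
            (if s ≤ x then (if x < s + t then (s + t - x) ^ (H - 1/2) else 0) else 0)) = 0 := by
        rw [intervalIntegral.integral_congr (g := fun _ => (0:ℝ)) fun x hx => ?_,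
          intervalIntegral.integral_zero]
        rw [Set.uIcc_of_le hst1] at hx
        rw [if_neg (not_lt.mpr hx.1), ite_self]
      rw [P1, P2, P3, stmt12_val' H h0 h1 (s + t) s (s + t) (by linarith), zero_add, add_zero]
    rw [step1, e1, Eh, stmt12_val' H h0 h1 s 0 1 (by norm_num),
      stmt12_val' H h0 h1 (s + t) 0 1 (by norm_num)]
    have f1 : max (s - 0) 0 ^ (H + 1/2) ≤ max (s + t - 0) 0 ^ (H + 1/2) := mono _ _ (by linarith)
    have f2 : 0 ≤ max (s - 1) 0 ^ (H + 1/2) := nn _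
    have f3 : max (s + t - 1) 0 ^ (H + 1/2) ≤ t ^ (H + 1/2) := bt _ (by linarith)
    have f4 : max (s + t - s) 0 ^ (H + 1/2) ≤ t ^ (H + 1/2) := bt _ (by linarith)
    have f5 : 0 ≤ max (s + t - (s + t)) 0 ^ (H + 1/2) := nn _
    have comb : ((max (s - 0) 0 ^ (H + 1/2) - max (s - 1) 0 ^ (H + 1/2)) / (H + 1/2)
          - (max (s + t - 0) 0 ^ (H + 1/2) - max (s + t - 1) 0 ^ (H + 1/2)) / (H + 1/2))
          + 2 * ((max (s + t - s) 0 ^ (H + 1/2)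
            - max (s + t - (s + t)) 0 ^ (H + 1/2)) / (H + 1/2))
        = (max (s - 0) 0 ^ (H + 1/2) - max (s - 1) 0 ^ (H + 1/2)
            - max (s + t - 0) 0 ^ (H + 1/2) + max (s + t - 1) 0 ^ (H + 1/2)
            + 2 * max (s + t - s) 0 ^ (H + 1/2)
            - 2 * max (s + t - (s + t)) 0 ^ (H + 1/2)) / (H + 1/2) := by
      ring
    rw [comb, div_le_iff₀ hp,
      show 3 / (H + 1/2) * t ^ (H + 1/2) * (H + 1/2) = 3 * t ^ (H + 1/2) by field_simp]
    linarith
end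

section
/- Let H ∈ (0,1/2), K_1(t,s) = (t-s)^{H-1/2} 1_{s<t}, and for g ∈ L^2[0,1] set h_1(t) = ∫_0^t K_1(t,s) g(s) ds. Then ∫_0^{1-t} |h_1(s+t) - h_1(s)|² ds ≤ C |g|_{L²}² t^{1+2H} for all t ∈ (0,1), with C depending only on H. -/
open MeasureTheory intervalIntegral Set
open scoped ENNReal

noncomputable def ker (a x : ℝ) : ℝ := if 0 < x then x ^ a else 0

lemma ker_nonneg (a x : ℝ) : 0 ≤ ker a x := by
  unfold ker; split
  · positivity
  · exact le_rfl

lemma ker_of_nonpos {a x : ℝ} (hx : x ≤ 0) : ker a x = 0 := if_neg (not_lt.2 hx)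

lemma ker_of_pos {a x : ℝ} (hx : 0 < x) : ker a x = x ^ a := if_pos hx

lemma ker_measurable (a : ℝ) : Measurable (ker a) :=
  Measurable.ite measurableSet_Ioi (measurable_id.pow measurable_const) measurable_const

lemma ker_anti {a x y : ℝ} (ha : a ≤ 0) (hx : 0 < x) (hxy : x ≤ y) : ker a y ≤ ker a x := by
  rw [ker_of_pos hx, ker_of_pos (hx.trans_le hxy)]
  exact Real.rpow_le_rpow_of_nonpos hx hxy ha

lemma intervalIntegrable_ker {a : ℝ} (ha : -1 < a) (b₁ b₂ : ℝ) :
    IntervalIntegrable (ker a) volume b₁ b₂ := by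
  suffices h : ∀ c : ℝ, IntervalIntegrable (ker a) volume 0 c from (h b₁).symm.trans (h b₂)
  intro c
  rcases le_or_gt c 0 with hc | hc
  · rw [intervalIntegrable_iff]
    have huIoc : Set.uIoc (0:ℝ) c = Set.Ioc c 0 := by
      rw [Set.uIoc, min_eq_right hc, max_eq_left hc]
    rw [huIoc]
    exact (integrableOn_congr_fun (fun x hx => ker_of_nonpos hx.2) measurableSet_Ioc).mpr
      (integrableOn_zero)
  · rw [intervalIntegrable_iff_integrableOn_Ioc_of_le hc.le]
    exact (integrableOn_congr_fun (fun x hx => ker_of_pos hx.1) measurableSet_Ioc).mpr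
      ((intervalIntegrable_iff_integrableOn_Ioc_of_le hc.le).mp (intervalIntegrable_rpow' ha))

lemma integral_ker {a : ℝ} (ha : -1 < a) (ha0 : a < 0) {b : ℝ} (hb : 0 ≤ b) :
    ∫ x in (0:ℝ)..b, ker a x = b ^ (a + 1) / (a + 1) := by
  have heq : Set.EqOn (ker a) (fun x : ℝ => x ^ a) (Set.uIcc 0 b) := by
    intro x hx
    rw [Set.uIcc_of_le hb] at hx
    rcases eq_or_lt_of_le hx.1 with h | h
    · rw [← h]; simp [ker, Real.zero_rpow (ne_of_lt ha0)]
    · exact ker_of_pos h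
  rw [intervalIntegral.integral_congr heq, integral_rpow (Or.inl ha),
    Real.zero_rpow (by linarith : a + 1 ≠ 0)]
  ring

lemma integrableOn_ker_sub_right {a : ℝ} (ha : -1 < a) (c r₁ r₂ : ℝ) (h12 : r₁ ≤ r₂) :
    IntegrableOn (fun s => ker a (s - c)) (Set.Ioc r₁ r₂) volume := by
  have h := (intervalIntegrable_ker ha (r₁ - c) (r₂ - c)).comp_sub_right c
  rw [sub_add_cancel, sub_add_cancel] at h
  exact (intervalIntegrable_iff_integrableOn_Ioc_of_le h12).mp h

lemma integrableOn_ker_sub_left {a : ℝ} (ha : -1 < a) (c r₁ r₂ : ℝ) (h12 : r₁ ≤ r₂) :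
    IntegrableOn (fun u => ker a (c - u)) (Set.Ioc r₁ r₂) volume := by
  have h := (intervalIntegrable_ker ha (c - r₁) (c - r₂)).comp_sub_left c
  rw [sub_sub_cancel, sub_sub_cancel] at h
  exact (intervalIntegrable_iff_integrableOn_Ioc_of_le h12).mp h

lemma integral_ker_sub_right {a : ℝ} (ha : -1 < a) (ha0 : a < 0) (c r₁ r₂ : ℝ)
    (hc : c ≤ r₁) (h12 : r₁ ≤ r₂) :
    ∫ s in Set.Ioc r₁ r₂, ker a (s - c) =
      ((r₂ - c) ^ (a + 1) - (r₁ - c) ^ (a + 1)) / (a + 1) := by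
  rw [← intervalIntegral.integral_of_le h12,
    intervalIntegral.integral_comp_sub_right (ker a) c]
  have h1 : IntervalIntegrable (ker a) volume 0 (r₁ - c) := intervalIntegrable_ker ha _ _
  have h2 : IntervalIntegrable (ker a) volume (r₁ - c) (r₂ - c) := intervalIntegrable_ker ha _ _
  have hadd := intervalIntegral.integral_add_adjacent_intervals h1 h2
  have e1 : ∫ x in (0:ℝ)..(r₁ - c), ker a x = (r₁ - c) ^ (a + 1) / (a + 1) :=
    integral_ker ha ha0 (by linarith)
  have e2 : ∫ x in (0:ℝ)..(r₂ - c), ker a x = (r₂ - c) ^ (a + 1) / (a + 1) :=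
    integral_ker ha ha0 (by linarith)
  rw [e1, e2] at hadd
  linear_combination hadd

lemma integral_ker_sub_left {a : ℝ} (ha : -1 < a) (ha0 : a < 0) (c r₁ r₂ : ℝ)
    (hc : r₂ ≤ c) (h12 : r₁ ≤ r₂) :
    ∫ u in Set.Ioc r₁ r₂, ker a (c - u) =
      ((c - r₁) ^ (a + 1) - (c - r₂) ^ (a + 1)) / (a + 1) := by
  rw [← intervalIntegral.integral_of_le h12,
    intervalIntegral.integral_comp_sub_left (ker a) c]
  have h1 : IntervalIntegrable (ker a) volume 0 (c - r₂) := intervalIntegrable_ker ha _ _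
  have h2 : IntervalIntegrable (ker a) volume (c - r₂) (c - r₁) := intervalIntegrable_ker ha _ _
  have hadd := intervalIntegral.integral_add_adjacent_intervals h1 h2
  have e1 : ∫ x in (0:ℝ)..(c - r₂), ker a x = (c - r₂) ^ (a + 1) / (a + 1) :=
    integral_ker ha ha0 (by linarith)
  have e2 : ∫ x in (0:ℝ)..(c - r₁), ker a x = (c - r₁) ^ (a + 1) / (a + 1) :=
    integral_ker ha ha0 (by linarith)
  rw [e1, e2] at hadd
  linear_combination hadd

lemma memLp_ker {a : ℝ} (h2a : -1 < 2 * a) (ha0 : a < 0) (c : ℝ) :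
    MemLp (fun u => ker a (c - u)) 2 (volume.restrict (Set.Ioc (0:ℝ) 1)) := by
  have meas : AEStronglyMeasurable (fun u => ker a (c - u)) (volume.restrict (Set.Ioc (0:ℝ) 1)) :=
    ((ker_measurable a).comp (measurable_const.sub measurable_id)).aestronglyMeasurable
  rw [memLp_two_iff_integrable_sq meas]
  have hfun : (fun u : ℝ => ker a (c - u) ^ 2) = fun u => ker (2 * a) (c - u) := by
    funext u
    by_cases h : 0 < c - u
    · rw [ker_of_pos h, ker_of_pos h, pow_two, ← Real.rpow_add h, two_mul]
    · rw [ker_of_nonpos (not_lt.1 h), ker_of_nonpos (not_lt.1 h)]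
      norm_num
  rw [hfun]
  exact integrableOn_ker_sub_left h2a c 0 1 zero_le_one

lemma integrable_ker_mul {a : ℝ} (h2a : -1 < 2 * a) (ha0 : a < 0) {g : ℝ → ℝ}
    (hg : MemLp g 2 (volume.restrict (Set.Ioc (0:ℝ) 1))) (c : ℝ) :
    IntegrableOn (fun u => ker a (c - u) * g u) (Set.Ioc (0:ℝ) 1) volume := by
  have h2 : (1 : ℝ≥0∞) / 1 = 1 / 2 + 1 / 2 := by
    rw [one_div_one, ENNReal.div_add_div_same, one_add_one_eq_two,
      ENNReal.div_self two_ne_zero ENNReal.ofNat_ne_top]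
  have hmul := hg.smul (memLp_ker h2a ha0 c) (r := 1)
  rw [memLp_one_iff_integrable] at hmul
  exact hmul.congr (Filter.Eventually.of_forall fun u => by
    simp [Pi.smul_apply, smul_eq_mul])

lemma ae_ne_vol (s : ℝ) : ∀ᵐ (u : ℝ) ∂(volume : Measure ℝ), u ≠ s := by
  rw [MeasureTheory.ae_iff]
  simpa [not_ne_iff, Set.setOf_eq_eq_singleton] using measure_singleton s

lemma E1 {a : ℝ} (ha : -1 < a) (ha0 : a < 0) {t s : ℝ} (ht : 0 < t) (hs : 0 ≤ s)
    (hst : s + t ≤ 1) :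
    ∫⁻ u in Set.Ioc (0:ℝ) 1, ENNReal.ofReal |ker a (s + t - u) - ker a (s - u)| ≤
      ENNReal.ofReal (2 * t ^ (a + 1) / (a + 1)) := by
  have hp : 0 < a + 1 := by linarith
  have hs1 : s ≤ 1 := by linarith
  have hi1 : IntegrableOn (fun u => ker a (s + t - u)) (Set.Ioc (0:ℝ) 1) volume :=
    integrableOn_ker_sub_left ha _ _ _ zero_le_one
  have hi2 : IntegrableOn (fun u => ker a (s - u)) (Set.Ioc (0:ℝ) 1) volume :=
    integrableOn_ker_sub_left ha _ _ _ zero_le_one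
  have hDmeas : AEStronglyMeasurable (fun u => |ker a (s + t - u) - ker a (s - u)|)
      (volume.restrict (Set.Ioc (0:ℝ) 1)) :=
    ((((ker_measurable a).comp ((measurable_const.sub measurable_id))).sub
      ((ker_measurable a).comp ((measurable_const.sub measurable_id)))).abs).aestronglyMeasurable
  have hD : IntegrableOn (fun u => |ker a (s + t - u) - ker a (s - u)|)
      (Set.Ioc (0:ℝ) 1) volume := by
    refine (hi1.add hi2).mono' hDmeas (Filter.Eventually.of_forall fun u => ?_)
    have h1 := ker_nonneg a (s + t - u)
    have h2 := ker_nonneg a (s - u)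
    rw [Real.norm_eq_abs, abs_abs]
    calc |ker a (s + t - u) - ker a (s - u)| ≤ |ker a (s + t - u)| + |ker a (s - u)| :=
          abs_sub _ _
      _ = ker a (s + t - u) + ker a (s - u) := by rw [abs_of_nonneg h1, abs_of_nonneg h2]
  rw [← ofReal_integral_eq_lintegral_ofReal hD (Filter.Eventually.of_forall fun u => abs_nonneg _)]
  apply ENNReal.ofReal_le_ofReal
  have hsplit : Set.Ioc (0:ℝ) 1 = Set.Ioc 0 s ∪ Set.Ioc s 1 :=
    (Set.Ioc_union_Ioc_eq_Ioc hs hs1).symm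
  have hsub1 : Set.Ioc (0:ℝ) s ⊆ Set.Ioc (0:ℝ) 1 := Set.Ioc_subset_Ioc_right hs1
  have hsub2 : Set.Ioc s 1 ⊆ Set.Ioc (0:ℝ) 1 := Set.Ioc_subset_Ioc_left hs
  rw [hsplit, setIntegral_union (Set.Ioc_disjoint_Ioc_of_le le_rfl) measurableSet_Ioc
    (hD.mono_set hsub1) (hD.mono_set hsub2)]
  have hzp : (0:ℝ) ^ (a + 1) = 0 := Real.zero_rpow (ne_of_gt hp)
  -- piece 1
  have hP1 : ∫ u in Set.Ioc 0 s, |ker a (s + t - u) - ker a (s - u)| =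
      (s ^ (a + 1) - 0 ^ (a + 1)) / (a + 1) - ((s + t) ^ (a + 1) - t ^ (a + 1)) / (a + 1) := by
    have hcongr : ∀ᵐ u ∂(volume : Measure ℝ), u ∈ Set.Ioc 0 s →
        |ker a (s + t - u) - ker a (s - u)| = ker a (s - u) - ker a (s + t - u) := by
      filter_upwards [ae_ne_vol s] with u hne hu
      have hus : u < s := lt_of_le_of_ne hu.2 hne
      have h1 : 0 < s - u := by linarith
      have h2 : s - u ≤ s + t - u := by linarith
      have h3 := ker_anti ha0.le h1 h2
      rw [abs_of_nonpos (by linarith)]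
      ring
    rw [setIntegral_congr_ae measurableSet_Ioc hcongr,
      integral_sub (hi2.mono_set hsub1) (hi1.mono_set hsub1),
      integral_ker_sub_left ha ha0 s 0 s le_rfl hs,
      integral_ker_sub_left ha ha0 (s + t) 0 s (by linarith) hs,
      sub_zero, sub_self, sub_zero, add_sub_cancel_left]
  -- piece 2
  have hP2 : ∫ u in Set.Ioc s 1, |ker a (s + t - u) - ker a (s - u)| =
      (t ^ (a + 1) - 0 ^ (a + 1)) / (a + 1) := by
    have hcongr : Set.EqOn (fun u => |ker a (s + t - u) - ker a (s - u)|)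
        (fun u => ker a (s + t - u)) (Set.Ioc s 1) := by
      intro u hu
      simp only []
      rw [ker_of_nonpos (by linarith [hu.1] : s - u ≤ 0), sub_zero,
        abs_of_nonneg (ker_nonneg _ _)]
    rw [setIntegral_congr_fun measurableSet_Ioc hcongr]
    have hsplit2 : Set.Ioc s 1 = Set.Ioc s (s + t) ∪ Set.Ioc (s + t) 1 :=
      (Set.Ioc_union_Ioc_eq_Ioc (by linarith) hst).symm
    have hsubA : Set.Ioc s (s + t) ⊆ Set.Ioc (0:ℝ) 1 := Set.Ioc_subset_Ioc hs hst
    have hsubB : Set.Ioc (s + t) 1 ⊆ Set.Ioc (0:ℝ) 1 := Set.Ioc_subset_Ioc_left (by linarith)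
    rw [hsplit2, setIntegral_union (Set.Ioc_disjoint_Ioc_of_le le_rfl) measurableSet_Ioc
      (hi1.mono_set hsubA) (hi1.mono_set hsubB)]
    have hzero : ∫ u in Set.Ioc (s + t) 1, ker a (s + t - u) = 0 := by
      rw [setIntegral_congr_fun measurableSet_Ioc
        (fun u hu => ker_of_nonpos (by linarith [hu.1] : s + t - u ≤ 0))]
      exact integral_zero _ _
    rw [hzero, add_zero, integral_ker_sub_left ha ha0 (s + t) s (s + t) le_rfl (by linarith),
      add_sub_cancel_left, sub_self]
  rw [hP1, hP2, hzp]
  have hmono : s ^ (a + 1) ≤ (s + t) ^ (a + 1) :=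
    Real.rpow_le_rpow hs (by linarith) hp.le
  have heq : (s ^ (a+1) - 0)/(a+1) - ((s+t) ^ (a+1) - t ^ (a+1))/(a+1) + (t ^ (a+1) - 0)/(a+1)
      = (s ^ (a+1) - (s+t) ^ (a+1) + 2*t ^ (a+1))/(a+1) := by ring
  rw [heq]
  exact (div_le_div_iff_of_pos_right hp).mpr (by linarith)

lemma E2 {a : ℝ} (ha : -1 < a) (ha0 : a < 0) {t u : ℝ} (ht : 0 < t) (ht1 : t ≤ 1)
    (hu : 0 < u) :
    ∫⁻ s in Set.Ioc (0:ℝ) (1 - t), ENNReal.ofReal |ker a (s + t - u) - ker a (s - u)| ≤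
      ENNReal.ofReal (2 * t ^ (a + 1) / (a + 1)) := by
  have hp : 0 < a + 1 := by linarith
  have hzp : (0:ℝ) ^ (a + 1) = 0 := Real.zero_rpow (ne_of_gt hp)
  set f : ℝ → ℝ≥0∞ := fun s => ENNReal.ofReal |ker a (s + t - u) - ker a (s - u)| with hfdef
  -- drop the region s ≤ u - t where the integrand vanishes
  have hstep1 : ∫⁻ s in Set.Ioc (0:ℝ) (1 - t), f s ≤
      (∫⁻ s in Set.Ioc (u - t) u, f s) + ∫⁻ s in Set.Ioc u (u + 1), f s := by
    have hdecomp := lintegral_inter_add_diff f (Set.Ioc (0:ℝ) (1 - t))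
      (measurableSet_Ioi (a := u - t)) (μ := volume)
    have hzero : ∫⁻ s in Set.Ioc (0:ℝ) (1 - t) \ Set.Ioi (u - t), f s = 0 := by
      rw [setLIntegral_congr_fun (measurableSet_Ioc.diff measurableSet_Ioi)
        (fun s hs => ?_), lintegral_zero]
      have hsu : s ≤ u - t := not_lt.1 hs.2
      rw [hfdef]
      simp only []
      rw [ker_of_nonpos (by linarith : s + t - u ≤ 0), ker_of_nonpos (by linarith : s - u ≤ 0)]
      simp
    have hsub : Set.Ioc (0:ℝ) (1 - t) ∩ Set.Ioi (u - t) ⊆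
        Set.Ioc (u - t) u ∪ Set.Ioc u (u + 1) := by
      rintro s ⟨hs1, hs2⟩
      rcases le_or_gt s u with h | h
      · exact Or.inl ⟨hs2, h⟩
      · exact Or.inr ⟨h, by linarith [hs1.2]⟩
    calc ∫⁻ s in Set.Ioc (0:ℝ) (1 - t), f s
        = ∫⁻ s in Set.Ioc (0:ℝ) (1 - t) ∩ Set.Ioi (u - t), f s := by
          rw [← hdecomp, hzero, add_zero]
      _ ≤ ∫⁻ s in Set.Ioc (u - t) u ∪ Set.Ioc u (u + 1), f s := lintegral_mono_set hsub
      _ ≤ _ := by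
          rw [lintegral_union measurableSet_Ioc (Set.Ioc_disjoint_Ioc_of_le le_rfl)]
  -- piece A
  have hA : ∫⁻ s in Set.Ioc (u - t) u, f s ≤ ENNReal.ofReal (t ^ (a + 1) / (a + 1)) := by
    have hcongr : ∀ᵐ s ∂(volume : Measure ℝ), s ∈ Set.Ioc (u - t) u →
        f s = ENNReal.ofReal (ker a (s - (u - t))) := by
      refine Filter.Eventually.of_forall (fun s hs => ?_)
      rw [hfdef]
      simp only []
      rw [ker_of_nonpos (by linarith [hs.2] : s - u ≤ 0), sub_zero,
        abs_of_nonneg (ker_nonneg _ _)]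
      congr 1
      ring
    rw [setLIntegral_congr_fun_ae measurableSet_Ioc hcongr,
      ← ofReal_integral_eq_lintegral_ofReal
        (integrableOn_ker_sub_right ha (u - t) (u - t) u (by linarith))
        (Filter.Eventually.of_forall fun s => ker_nonneg _ _),
      integral_ker_sub_right ha ha0 (u - t) (u - t) u le_rfl (by linarith), sub_self, hzp]
    apply ENNReal.ofReal_le_ofReal
    have : u - (u - t) = t := by ring
    rw [this, sub_zero]
  -- piece B
  have hB : ∫⁻ s in Set.Ioc u (u + 1), f s ≤ ENNReal.ofReal (t ^ (a + 1) / (a + 1)) := by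
    have hcongr : ∀ᵐ s ∂(volume : Measure ℝ), s ∈ Set.Ioc u (u + 1) →
        f s = ENNReal.ofReal (ker a (s - u) - ker a (s - (u - t))) := by
      refine Filter.Eventually.of_forall (fun s hs => ?_)
      have h1 : 0 < s - u := by linarith [hs.1]
      have h2 : s - u ≤ s + t - u := by linarith
      have h3 := ker_anti ha0.le h1 h2
      rw [hfdef]
      simp only []
      rw [abs_of_nonpos (by linarith)]
      congr 1
      have : s - (u - t) = s + t - u := by ring
      rw [this]
      ring
    have hiB1 : IntegrableOn (fun s => ker a (s - u)) (Set.Ioc u (u + 1)) volume :=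
      integrableOn_ker_sub_right ha u u (u + 1) (by linarith)
    have hiB2 : IntegrableOn (fun s => ker a (s - (u - t))) (Set.Ioc u (u + 1)) volume :=
      integrableOn_ker_sub_right ha (u - t) u (u + 1) (by linarith)
    have hiB : IntegrableOn (fun s => ker a (s - u) - ker a (s - (u - t)))
        (Set.Ioc u (u + 1)) volume := hiB1.sub hiB2
    have hnn : 0 ≤ᵐ[volume.restrict (Set.Ioc u (u + 1))]
        fun s => ker a (s - u) - ker a (s - (u - t)) := by
      filter_upwards [ae_restrict_mem (measurableSet_Ioc (a := u) (b := u + 1))] with s hs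
      have h1 : 0 < s - u := by linarith [hs.1]
      have h2 : s - u ≤ s - (u - t) := by linarith
      have h3 := ker_anti ha0.le h1 h2
      simp only [Pi.zero_apply]
      linarith
    rw [setLIntegral_congr_fun_ae measurableSet_Ioc hcongr,
      ← ofReal_integral_eq_lintegral_ofReal hiB hnn,
      integral_sub hiB1 hiB2,
      integral_ker_sub_right ha ha0 u u (u + 1) le_rfl (by linarith),
      integral_ker_sub_right ha ha0 (u - t) u (u + 1) (by linarith) (by linarith)]
    apply ENNReal.ofReal_le_ofReal
    have e1 : u + 1 - u = 1 := by ring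
    have e2 : u + 1 - (u - t) = 1 + t := by ring
    have e3 : u - (u - t) = t := by ring
    rw [e1, e2, e3, sub_self, hzp, Real.one_rpow]
    have hmono : (1:ℝ) ≤ (1 + t) ^ (a + 1) := by
      calc (1:ℝ) = 1 ^ (a + 1) := (Real.one_rpow _).symm
        _ ≤ (1 + t) ^ (a + 1) := Real.rpow_le_rpow zero_le_one (by linarith) hp.le
    have heq : (1 - 0) / (a + 1) - ((1 + t) ^ (a + 1) - t ^ (a + 1)) / (a + 1)
        = (1 - (1 + t) ^ (a + 1) + t ^ (a + 1)) / (a + 1) := by ring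
    rw [heq]
    exact (div_le_div_iff_of_pos_right hp).mpr (by linarith)
  calc ∫⁻ s in Set.Ioc (0:ℝ) (1 - t), f s
      ≤ (∫⁻ s in Set.Ioc (u - t) u, f s) + ∫⁻ s in Set.Ioc u (u + 1), f s := hstep1
    _ ≤ ENNReal.ofReal (t ^ (a + 1) / (a + 1)) + ENNReal.ofReal (t ^ (a + 1) / (a + 1)) :=
        add_le_add hA hB
    _ = ENNReal.ofReal (2 * t ^ (a + 1) / (a + 1)) := by
        rw [← ENNReal.ofReal_add (by positivity) (by positivity)]
        congr 1
        ring

/-- L²-modulus of continuity for the singular part of the fBm Volterra operator: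
`∫₀^{1-t} |h₁(s+t) - h₁(s)|² ds ≤ C |g|_{L²}² t^{1+2H}`. -/
theorem stmt_13 (H : ℝ) (h0 : 0 < H) (h1 : H < 1/2) :
    ∃ C : ℝ, 0 < C ∧ ∀ g : ℝ → ℝ,
      MemLp g 2 (volume.restrict (Set.Icc (0:ℝ) 1)) →
      ∀ h₁ : ℝ → ℝ,
      (∀ t, h₁ t = ∫ s in (0:ℝ)..t, (if s < t then (t - s) ^ (H - 1/2) else 0) * g s) →
      ∀ t : ℝ, 0 < t → t < 1 →
        (∫ s in (0:ℝ)..(1 - t), |h₁ (s + t) - h₁ s| ^ 2) ≤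
          C * (∫ s in (0:ℝ)..1, g s ^ 2) * t ^ (1 + 2 * H) := by
  set a := H - 1/2 with hadef
  have ha : -1 < a := by rw [hadef]; linarith
  have h2a : -1 < 2 * a := by rw [hadef]; linarith
  have ha0 : a < 0 := by rw [hadef]; linarith
  have hp : 0 < a + 1 := by linarith
  refine ⟨(2 / (a + 1)) ^ 2, by positivity, ?_⟩
  intro g hg h₁ hh₁ t ht0 ht1
  have hM0 : (0:ℝ) ≤ 1 - t := by linarith
  have hg' : MemLp g 2 (volume.restrict (Set.Ioc (0:ℝ) 1)) :=
    hg.mono_measure (Measure.restrict_mono Set.Ioc_subset_Icc_self le_rfl)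
  have gmeas := hg'.aestronglyMeasurable
  have hker : ∀ r u : ℝ, (if u < r then (r - u) ^ a else 0) = ker a (r - u) := by
    intro r u
    rw [ker]
    by_cases h : u < r
    · rw [if_pos h, if_pos (sub_pos.mpr h)]
    · rw [if_neg h, if_neg (by simpa [sub_pos] using h)]
  -- representation of h₁ as an integral over (0,1]
  have hrep : ∀ r : ℝ, 0 ≤ r → r ≤ 1 →
      h₁ r = ∫ u in Set.Ioc (0:ℝ) 1, ker a (r - u) * g u := by
    intro r hr0 hr1
    rw [hh₁ r, intervalIntegral.integral_of_le hr0]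
    rw [show (fun u => (if u < r then (r - u) ^ a else 0) * g u)
        = fun u => ker a (r - u) * g u from funext fun u => by rw [hker r u]]
    have hint := integrable_ker_mul h2a ha0 hg' r
    have hsplit : Set.Ioc (0:ℝ) 1 = Set.Ioc 0 r ∪ Set.Ioc r 1 :=
      (Set.Ioc_union_Ioc_eq_Ioc hr0 hr1).symm
    rw [hsplit, setIntegral_union (Set.Ioc_disjoint_Ioc_of_le le_rfl) measurableSet_Ioc
      (hint.mono_set (Set.Ioc_subset_Ioc_right hr1))
      (hint.mono_set (Set.Ioc_subset_Ioc_left hr0))]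
    have hz : ∫ u in Set.Ioc r 1, ker a (r - u) * g u = 0 := by
      rw [setIntegral_congr_fun measurableSet_Ioc (fun u hu => by
        rw [ker_of_nonpos (by linarith [hu.1] : r - u ≤ 0), zero_mul])]
      exact integral_zero _ _
    rw [hz, add_zero]
  -- the difference as a single integral
  have hdiff : ∀ s ∈ Set.Ioc (0:ℝ) (1 - t), h₁ (s + t) - h₁ s =
      ∫ u in Set.Ioc (0:ℝ) 1, (ker a (s + t - u) - ker a (s - u)) * g u := by
    intro s hs
    rw [hrep (s + t) (by linarith [hs.1]) (by linarith [hs.2]),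
      hrep s hs.1.le (by linarith [hs.2]),
      ← integral_sub (integrable_ker_mul h2a ha0 hg' (s + t)) (integrable_ker_mul h2a ha0 hg' s)]
    congr 1
    funext u
    ring
  -- basic facts about g²
  have hgsq : IntegrableOn (fun u => g u ^ 2) (Set.Ioc (0:ℝ) 1) volume := hg'.integrable_sq
  have hI0 : 0 ≤ ∫ u in Set.Ioc (0:ℝ) 1, g u ^ 2 :=
    setIntegral_nonneg measurableSet_Ioc (fun u _ => sq_nonneg _)
  have hIeq : ∫ s in (0:ℝ)..1, g s ^ 2 = ∫ u in Set.Ioc (0:ℝ) 1, g u ^ 2 :=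
    intervalIntegral.integral_of_le zero_le_one
  set B := 2 * t ^ (a + 1) / (a + 1) with hB
  have htp0 : 0 ≤ t ^ (a + 1) := Real.rpow_nonneg ht0.le _
  have hB0 : 0 ≤ B := by rw [hB]; positivity
  -- rewrite the LHS
  rw [intervalIntegral.integral_of_le hM0]
  set ψ : ℝ → ℝ := fun s =>
    ∫ u in Set.Ioc (0:ℝ) 1, (ker a (s + t - u) - ker a (s - u)) * g u with hψ
  have hφcongr : Set.EqOn (fun s => |h₁ (s + t) - h₁ s| ^ 2) (fun s => |ψ s| ^ 2)
      (Set.Ioc 0 (1 - t)) := fun s hs => by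
    simp only []
    rw [hdiff s hs]
  rw [setIntegral_congr_fun measurableSet_Ioc hφcongr]
  -- measurability of ψ
  have hprodmeas : AEStronglyMeasurable
      (fun p : ℝ × ℝ => (ker a (p.1 + t - p.2) - ker a (p.1 - p.2)) * g p.2)
      ((volume.restrict (Set.Ioc (0:ℝ) (1 - t))).prod (volume.restrict (Set.Ioc (0:ℝ) 1))) := by
    apply AEStronglyMeasurable.mul
    · exact (((ker_measurable a).comp (((measurable_fst.add_const t).sub measurable_snd))).sub
        ((ker_measurable a).comp (measurable_fst.sub measurable_snd))).aestronglyMeasurable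
    · exact gmeas.comp_quasiMeasurePreserving Measure.quasiMeasurePreserving_snd
  have hψmeas : AEStronglyMeasurable ψ (volume.restrict (Set.Ioc (0:ℝ) (1 - t))) :=
    hprodmeas.integral_prod_right'
  have hφmeas : AEStronglyMeasurable (fun s => |ψ s| ^ 2)
      (volume.restrict (Set.Ioc (0:ℝ) (1 - t))) := by
    refine (hψmeas.norm.mul hψmeas.norm).congr
      (Filter.Eventually.of_forall fun s => ?_)
    simp [Real.norm_eq_abs, pow_two]
  rw [MeasureTheory.integral_eq_lintegral_of_nonneg_ae
    (Filter.Eventually.of_forall fun s => by positivity) hφmeas]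
  have hRHS0 : 0 ≤ (2 / (a + 1)) ^ 2 * (∫ s in (0:ℝ)..1, g s ^ 2) * t ^ (1 + 2 * H) := by
    apply mul_nonneg (mul_nonneg (by positivity) (hIeq ▸ hI0)) (Real.rpow_nonneg ht0.le _)
  apply ENNReal.toReal_le_of_le_ofReal hRHS0
  -- the ℝ≥0∞ chain
  set Dε : ℝ → ℝ → ℝ≥0∞ := fun s u => ENNReal.ofReal |ker a (s + t - u) - ker a (s - u)|
    with hDε
  set G : ℝ → ℝ≥0∞ := fun u => ENNReal.ofReal (g u ^ 2) with hG
  set Gh : ℝ → ℝ≥0∞ := fun u => ENNReal.ofReal |g u| with hGh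
  have hGh_meas : AEMeasurable Gh (volume.restrict (Set.Ioc (0:ℝ) 1)) := by
    refine (ENNReal.measurable_ofReal.comp_aemeasurable
      (gmeas.norm.aemeasurable)).congr ?_
    exact Filter.Eventually.of_forall fun u => by rw [hGh]; simp [Real.norm_eq_abs]
  have hDmeas : ∀ s, Measurable (Dε s) := fun s =>
    (((ker_measurable a).comp (measurable_const.sub measurable_id)).sub
      ((ker_measurable a).comp (measurable_const.sub measurable_id))).abs.ennreal_ofReal
  -- pointwise bound by the L¹ norm against |g|
  have key1 : ∀ s : ℝ, ENNReal.ofReal (|ψ s| ^ 2) ≤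
      (∫⁻ u in Set.Ioc (0:ℝ) 1, Dε s u * Gh u) ^ 2 := by
    intro s
    set L := ∫⁻ u in Set.Ioc (0:ℝ) 1,
      ENNReal.ofReal ‖(ker a (s + t - u) - ker a (s - u)) * g u‖ with hL
    have habs : |ψ s| ≤ L.toReal := by
      rw [← Real.norm_eq_abs]
      exact norm_integral_le_lintegral_norm _
    have hLe : L = ∫⁻ u in Set.Ioc (0:ℝ) 1, Dε s u * Gh u := by
      apply lintegral_congr
      intro u
      rw [Real.norm_eq_abs, abs_mul, ENNReal.ofReal_mul (abs_nonneg _)]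
    by_cases hfin : L = ⊤
    · rw [← hLe, hfin, ENNReal.top_pow two_ne_zero]
      exact le_top
    · calc ENNReal.ofReal (|ψ s| ^ 2) ≤ ENNReal.ofReal (L.toReal ^ 2) :=
            ENNReal.ofReal_le_ofReal (pow_le_pow_left₀ (abs_nonneg _) habs 2)
        _ = (ENNReal.ofReal L.toReal) ^ 2 := ENNReal.ofReal_pow ENNReal.toReal_nonneg 2
        _ = L ^ 2 := by rw [ENNReal.ofReal_toReal hfin]
        _ = (∫⁻ u in Set.Ioc (0:ℝ) 1, Dε s u * Gh u) ^ 2 := by rw [hLe]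
  -- Cauchy–Schwarz
  have key2 : ∀ s : ℝ, (∫⁻ u in Set.Ioc (0:ℝ) 1, Dε s u * Gh u) ^ 2 ≤
      (∫⁻ u in Set.Ioc (0:ℝ) 1, Dε s u) * (∫⁻ u in Set.Ioc (0:ℝ) 1, Dε s u * G u) := by
    intro s
    set q : ℝ → ℝ≥0∞ := fun u => Dε s u ^ (1/2 : ℝ) with hq
    have hqmeas : AEMeasurable q (volume.restrict (Set.Ioc (0:ℝ) 1)) :=
      ((hDmeas s).pow measurable_const).aemeasurable
    have hwmeas : AEMeasurable (fun u => q u * Gh u) (volume.restrict (Set.Ioc (0:ℝ) 1)) :=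
      hqmeas.mul hGh_meas
    have hconj : Real.HolderConjugate 2 2 := Real.HolderConjugate.two_two
    have hholder := ENNReal.lintegral_mul_le_Lp_mul_Lq
      (volume.restrict (Set.Ioc (0:ℝ) 1)) hconj hqmeas hwmeas
    have hqq : ∀ x : ℝ≥0∞, x ^ (1/2:ℝ) * x ^ (1/2:ℝ) = x := fun x => by
      rw [← pow_two, ← ENNReal.rpow_natCast (x ^ (1/2:ℝ)) 2, ← ENNReal.rpow_mul]
      norm_num
    have hq2 : ∀ x : ℝ≥0∞, (x ^ (1/2:ℝ)) ^ (2:ℝ) = x := fun x => by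
      rw [← ENNReal.rpow_mul]
      norm_num
    calc (∫⁻ u in Set.Ioc (0:ℝ) 1, Dε s u * Gh u) ^ 2
        = (∫⁻ u in Set.Ioc (0:ℝ) 1, (q * fun v => q v * Gh v) u) ^ 2 := by
          congr 1
          apply lintegral_congr
          intro u
          simp only [Pi.mul_apply, hq]
          rw [← mul_assoc, hqq]
      _ ≤ ((∫⁻ u in Set.Ioc (0:ℝ) 1, q u ^ (2:ℝ)) ^ (1/(2:ℝ)) *
            (∫⁻ u in Set.Ioc (0:ℝ) 1, (q u * Gh u) ^ (2:ℝ)) ^ (1/(2:ℝ))) ^ 2 :=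
          pow_le_pow_left' hholder 2
      _ = (∫⁻ u in Set.Ioc (0:ℝ) 1, q u ^ (2:ℝ)) *
            (∫⁻ u in Set.Ioc (0:ℝ) 1, (q u * Gh u) ^ (2:ℝ)) := by
          rw [mul_pow, ← ENNReal.rpow_natCast (_ ^ (1/(2:ℝ))) 2, ← ENNReal.rpow_mul,
            ← ENNReal.rpow_natCast (_ ^ (1/(2:ℝ))) 2, ← ENNReal.rpow_mul]
          norm_num
      _ = (∫⁻ u in Set.Ioc (0:ℝ) 1, Dε s u) * (∫⁻ u in Set.Ioc (0:ℝ) 1, Dε s u * G u) := by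
          congr 1
          · exact lintegral_congr fun u => hq2 _
          · apply lintegral_congr
            intro u
            rw [ENNReal.mul_rpow_of_nonneg _ _ (by norm_num : (0:ℝ) ≤ 2), hq2]
            congr 1
            rw [hGh, hG]
            simp only []
            rw [ENNReal.ofReal_rpow_of_nonneg (abs_nonneg _) (by norm_num : (0:ℝ) ≤ 2)]
            congr 1
            rw [show ((2:ℝ)) = ((2:ℕ):ℝ) by norm_num, Real.rpow_natCast, sq_abs]
  -- the per-slice kernel estimates
  have hE1' : ∀ s ∈ Set.Ioc (0:ℝ) (1 - t), (∫⁻ u in Set.Ioc (0:ℝ) 1, Dε s u) ≤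
      ENNReal.ofReal B := fun s hs => E1 ha ha0 ht0 hs.1.le (by linarith [hs.2])
  have hE2' : ∀ u ∈ Set.Ioc (0:ℝ) 1, (∫⁻ s in Set.Ioc (0:ℝ) (1 - t), Dε s u) ≤
      ENNReal.ofReal B := fun u hu => E2 ha ha0 ht0 ht1.le hu.1
  -- Tonelli: product measurability
  have hGm : AEMeasurable G (volume.restrict (Set.Ioc (0:ℝ) 1)) :=
    ENNReal.measurable_ofReal.comp_aemeasurable (gmeas.aemeasurable.pow_const 2)
  have hswap : ∫⁻ s in Set.Ioc (0:ℝ) (1 - t), ∫⁻ u in Set.Ioc (0:ℝ) 1, Dε s u * G u =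
      ∫⁻ u in Set.Ioc (0:ℝ) 1, ∫⁻ s in Set.Ioc (0:ℝ) (1 - t), Dε s u * G u := by
    apply lintegral_lintegral_swap
    show AEMeasurable ((fun p : ℝ × ℝ => Dε p.1 p.2) * (fun p : ℝ × ℝ => G p.2)) _
    apply AEMeasurable.mul
    · exact ((((ker_measurable a).comp
        (((measurable_fst.add_const t).sub measurable_snd))).sub
        ((ker_measurable a).comp
        (measurable_fst.sub measurable_snd))).abs.ennreal_ofReal).aemeasurable
    · exact hGm.comp_quasiMeasurePreserving Measure.quasiMeasurePreserving_snd
  calc ∫⁻ s in Set.Ioc (0:ℝ) (1 - t), ENNReal.ofReal (|ψ s| ^ 2)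
      ≤ ∫⁻ s in Set.Ioc (0:ℝ) (1 - t),
          (∫⁻ u in Set.Ioc (0:ℝ) 1, Dε s u) * (∫⁻ u in Set.Ioc (0:ℝ) 1, Dε s u * G u) :=
        lintegral_mono fun s => le_trans (key1 s) (key2 s)
    _ ≤ ∫⁻ s in Set.Ioc (0:ℝ) (1 - t),
          ENNReal.ofReal B * (∫⁻ u in Set.Ioc (0:ℝ) 1, Dε s u * G u) := by
        apply lintegral_mono_ae
        filter_upwards [ae_restrict_mem measurableSet_Ioc] with s hs
        exact mul_le_mul_left (hE1' s hs) _
    _ = ENNReal.ofReal B *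
          ∫⁻ s in Set.Ioc (0:ℝ) (1 - t), ∫⁻ u in Set.Ioc (0:ℝ) 1, Dε s u * G u :=
        lintegral_const_mul' _ _ ENNReal.ofReal_ne_top
    _ = ENNReal.ofReal B *
          ∫⁻ u in Set.Ioc (0:ℝ) 1, ∫⁻ s in Set.Ioc (0:ℝ) (1 - t), Dε s u * G u := by
        rw [hswap]
    _ = ENNReal.ofReal B *
          ∫⁻ u in Set.Ioc (0:ℝ) 1, (∫⁻ s in Set.Ioc (0:ℝ) (1 - t), Dε s u) * G u := by
        congr 1
        exact lintegral_congr fun u => lintegral_mul_const' _ _ ENNReal.ofReal_ne_top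
    _ ≤ ENNReal.ofReal B * ∫⁻ u in Set.Ioc (0:ℝ) 1, ENNReal.ofReal B * G u := by
        apply mul_le_mul_right
        apply lintegral_mono_ae
        filter_upwards [ae_restrict_mem measurableSet_Ioc] with u hu
        exact mul_le_mul_left (hE2' u hu) _
    _ = ENNReal.ofReal B * (ENNReal.ofReal B * ∫⁻ u in Set.Ioc (0:ℝ) 1, G u) := by
        congr 1
        exact lintegral_const_mul' _ _ ENNReal.ofReal_ne_top
    _ = ENNReal.ofReal B * (ENNReal.ofReal B *
          ENNReal.ofReal (∫ u in Set.Ioc (0:ℝ) 1, g u ^ 2)) := by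
        rw [← ofReal_integral_eq_lintegral_ofReal hgsq
          (Filter.Eventually.of_forall fun u => sq_nonneg _)]
    _ ≤ ENNReal.ofReal ((2 / (a + 1)) ^ 2 * (∫ s in (0:ℝ)..1, g s ^ 2) * t ^ (1 + 2 * H)) := by
        rw [← ENNReal.ofReal_mul hB0, ← ENNReal.ofReal_mul hB0]
        apply ENNReal.ofReal_le_ofReal
        rw [hIeq]
        have htt : t ^ (a + 1) * t ^ (a + 1) = t ^ (1 + 2 * H) := by
          rw [← Real.rpow_add ht0]
          congr 1
          rw [hadef]
          ring
        apply le_of_eq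
        calc B * (B * ∫ u in Set.Ioc (0:ℝ) 1, g u ^ 2)
            = (2 / (a + 1)) ^ 2 * (∫ u in Set.Ioc (0:ℝ) 1, g u ^ 2) *
                (t ^ (a + 1) * t ^ (a + 1)) := by
              rw [hB]
              ring
          _ = (2 / (a + 1)) ^ 2 * (∫ u in Set.Ioc (0:ℝ) 1, g u ^ 2) * t ^ (1 + 2 * H) := by
              rw [htt]
end
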